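/- arXiv:1812.00533 — 3 statements merged into one kernel-verified Lean document; each statement's English description precedes it below -/
import Mathlib

section
/- Let B be a Ferrers board with n columns whose root vector ξ(B) has maximum entry M, and suppose the first (leftmost) occurrence of M in ξ(B) is in position j. Then the vertex B is connected by a path of edges in the rook equivalence graph G(B) to a Ferrers board B′ whose root vector ξ(B′) agrees with ξ(B) in the first j positions and is weakly decreasing for indices i ≥ j. -/
open Finset


/-- A (non-attacking) rook placement on the board with column heights `b`:
a set of cells (column, row) inside the board, no two sharing a column or a row.
Cells are 0-indexed: cell `(i, j)` lies in the board iff `j < b i`. -/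
def IsRookPlacement {n : ℕ} (b : Fin n → ℕ) (P : Finset (Fin n × ℕ)) : Prop :=
  (∀ c ∈ P, c.2 < b c.1) ∧
  ∀ c ∈ P, ∀ d ∈ P, c ≠ d → c.1 ≠ d.1 ∧ c.2 ≠ d.2

/-- The `k`-th rook number of the board `b`: the number of placements of `k`
non-attacking rooks on `b`. -/
noncomputable def rookNum {n : ℕ} (b : Fin n → ℕ) (k : ℕ) : ℕ :=
  Set.ncard {P : Finset (Fin n × ℕ) | IsRookPlacement b P ∧ P.card = k}

/-- Two boards are rook equivalent if all their rook numbers agree. -/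
def RookEquiv {n₁ n₂ : ℕ} (b₁ : Fin n₁ → ℕ) (b₂ : Fin n₂ → ℕ) : Prop :=
  ∀ k, rookNum b₁ k = rookNum b₂ k

open Classical in
noncomputable def placements {n : ℕ} (b : Fin n → ℕ) (k : ℕ) : Finset (Finset (Fin n × ℕ)) :=
  ((Finset.univ ×ˢ Finset.range (∑ i, b i)).powerset).filter
    (fun P => IsRookPlacement b P ∧ P.card = k)

lemma mem_placements {n : ℕ} {b : Fin n → ℕ} {k : ℕ} {P : Finset (Fin n × ℕ)} :
    P ∈ placements b k ↔ IsRookPlacement b P ∧ P.card = k := by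
  classical
  constructor
  · intro h; exact (Finset.mem_filter.mp h).2
  · intro h
    refine Finset.mem_filter.mpr ⟨Finset.mem_powerset.mpr ?_, h⟩
    intro c hc
    refine Finset.mem_product.mpr ⟨Finset.mem_univ _, Finset.mem_range.mpr ?_⟩
    have h1 : c.2 < b c.1 := h.1.1 c hc
    have h2 : b c.1 ≤ ∑ i, b i := Finset.single_le_sum (fun _ _ => Nat.zero_le _) (Finset.mem_univ c.1)
    omega

lemma rookNum_eq_card {n : ℕ} (b : Fin n → ℕ) (k : ℕ) :
    rookNum b k = (placements b k).card := by
  rw [rookNum]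
  rw [show {P : Finset (Fin n × ℕ) | IsRookPlacement b P ∧ P.card = k} = ↑(placements b k) by
    ext P; simp [mem_placements]]
  exact Set.ncard_coe_finset _

lemma rookNum_zero {n : ℕ} (b : Fin n → ℕ) : rookNum b 0 = 1 := by
  rw [rookNum_eq_card]
  have : placements b 0 = {∅} := by
    ext P
    simp only [mem_placements, Finset.mem_singleton, Finset.card_eq_zero]
    constructor
    · rintro ⟨_, h⟩; exact h
    · rintro rfl; exact ⟨⟨fun c hc => absurd hc (Finset.notMem_empty c),
        fun c hc => absurd hc (Finset.notMem_empty c)⟩, rfl⟩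
  rw [this]; rfl

/-- rows of a placement are pairwise distinct, so `card (image snd) = card`. -/
lemma card_image_snd {n : ℕ} {b : Fin n → ℕ} {P : Finset (Fin n × ℕ)}
    (hP : IsRookPlacement b P) : (P.image Prod.snd).card = P.card := by
  apply Finset.card_image_of_injOn
  intro c hc d hd hcd
  by_contra hne
  exact (hP.2 c hc d hd hne).2 hcd

lemma card_image_fst {n : ℕ} {b : Fin n → ℕ} {P : Finset (Fin n × ℕ)}
    (hP : IsRookPlacement b P) : (P.image Prod.fst).card = P.card := by
  apply Finset.card_image_of_injOn
  intro c hc d hd hcd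
  by_contra hne
  exact (hP.2 c hc d hd hne).1 hcd

lemma rookNum_eq_zero_of_gt {n : ℕ} (b : Fin n → ℕ) (k : ℕ) (hk : n < k) :
    rookNum b k = 0 := by
  rw [rookNum_eq_card, Finset.card_eq_zero]
  by_contra h
  obtain ⟨P, hP⟩ := Finset.nonempty_iff_ne_empty.mpr h
  rw [mem_placements] at hP
  have h1 : (P.image Prod.fst).card = k := by rw [card_image_fst hP.1, hP.2]
  have h2 : (P.image Prod.fst).card ≤ n := by
    simpa using Finset.card_le_card (Finset.subset_univ (P.image Prod.fst))
  omega

/-- rows used by a placement on a board with all columns ≤ c lie in range c -/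
lemma rows_subset_range {n : ℕ} {b : Fin n → ℕ} {P : Finset (Fin n × ℕ)}
    (hP : IsRookPlacement b P) {c : ℕ} (hc : ∀ i, b i ≤ c) :
    P.image Prod.snd ⊆ Finset.range c := by
  intro r hr
  obtain ⟨cell, hcell, rfl⟩ := Finset.mem_image.mp hr
  exact Finset.mem_range.mpr (lt_of_lt_of_le (hP.1 cell hcell) (hc cell.1))

lemma rookNum_eq_zero_of_rows {n : ℕ} (b : Fin n → ℕ) (k : ℕ) {c : ℕ}
    (hc : ∀ i, b i ≤ c) (hk : c < k) : rookNum b k = 0 := by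
  rw [rookNum_eq_card, Finset.card_eq_zero]
  by_contra h
  obtain ⟨P, hP⟩ := Finset.nonempty_iff_ne_empty.mpr h
  rw [mem_placements] at hP
  have h1 : (P.image Prod.snd).card = k := by rw [card_image_snd hP.1, hP.2]
  have h2 := Finset.card_le_card (rows_subset_range hP.1 hc)
  rw [h1, Finset.card_range] at h2
  omega
variable {n : ℕ}

section Rec
variable {n : ℕ}

/-- embedding of cells -/
def cellEmb (n : ℕ) : Fin n × ℕ ↪ Fin (n+1) × ℕ :=
  ⟨fun x => (x.1.castSucc, x.2), by
    intro a b h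
    simp only [Prod.mk.injEq] at h
    exact Prod.ext (Fin.castSucc_injective n h.1) h.2⟩

lemma cellEmb_apply (x : Fin n × ℕ) : cellEmb n x = (x.1.castSucc, x.2) := rfl

noncomputable def unmapCells (P : Finset (Fin (n+1) × ℕ)) : Finset (Fin n × ℕ) :=
  P.preimage (cellEmb n) ((cellEmb n).injective.injOn)

lemma mem_unmapCells {P : Finset (Fin (n+1) × ℕ)} {x : Fin n × ℕ} :
    x ∈ unmapCells P ↔ cellEmb n x ∈ P := Finset.mem_preimage

lemma unmapCells_map (Q : Finset (Fin n × ℕ)) : unmapCells (Q.map (cellEmb n)) = Q := by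
  ext x; rw [mem_unmapCells, Finset.mem_map]
  constructor
  · rintro ⟨y, hy, h⟩; rwa [(cellEmb n).injective h] at hy
  · intro h; exact ⟨x, h, rfl⟩

lemma map_unmapCells {P : Finset (Fin (n+1) × ℕ)}
    (h : ∀ r, (Fin.last n, r) ∉ P) : (unmapCells P).map (cellEmb n) = P := by
  ext y; rw [Finset.mem_map]
  constructor
  · rintro ⟨x, hx, rfl⟩; exact mem_unmapCells.mp hx
  · intro hy
    have hne : y.1 ≠ Fin.last n := by
      intro hEq
      apply h y.2
      have : y = (Fin.last n, y.2) := by rw [← hEq]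
      rwa [this] at hy
    obtain ⟨i, hi⟩ := Fin.exists_castSucc_eq.mpr hne
    refine ⟨(i, y.2), ?_, ?_⟩
    · rw [mem_unmapCells, cellEmb_apply]; simpa [hi] using hy
    · rw [cellEmb_apply]; simp [hi]

lemma isRookPlacement_map {b : Fin (n+1) → ℕ} {Q : Finset (Fin n × ℕ)}
    (hQ : IsRookPlacement (b ∘ Fin.castSucc) Q) : IsRookPlacement b (Q.map (cellEmb n)) := by
  constructor
  · intro c hc
    obtain ⟨x, hx, rfl⟩ := Finset.mem_map.mp hc
    exact hQ.1 x hx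
  · intro c hc d hd hcd
    obtain ⟨x, hx, rfl⟩ := Finset.mem_map.mp hc
    obtain ⟨y, hy, rfl⟩ := Finset.mem_map.mp hd
    have hxy : x ≠ y := fun h => hcd (by rw [h])
    obtain ⟨h1, h2⟩ := hQ.2 x hx y hy hxy
    exact ⟨fun h => h1 (Fin.castSucc_injective n h), h2⟩

lemma isRookPlacement_unmap {b : Fin (n+1) → ℕ} {Q : Finset (Fin n × ℕ)}
    (hQ : IsRookPlacement b (Q.map (cellEmb n))) : IsRookPlacement (b ∘ Fin.castSucc) Q := by
  constructor
  · intro c hc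
    exact hQ.1 (cellEmb n c) (Finset.mem_map_of_mem _ hc)
  · intro c hc d hd hcd
    have := hQ.2 (cellEmb n c) (Finset.mem_map_of_mem _ hc) (cellEmb n d)
      (Finset.mem_map_of_mem _ hd) (fun h => hcd ((cellEmb n).injective h))
    exact ⟨fun h => this.1 (by simp [cellEmb_apply, h]), this.2⟩

lemma isRookPlacement_subset {b : Fin n → ℕ} {P Q : Finset (Fin n × ℕ)}
    (hPQ : Q ⊆ P) (hP : IsRookPlacement b P) : IsRookPlacement b Q :=
  ⟨fun c hc => hP.1 c (hPQ hc), fun c hc d hd h => hP.2 c (hPQ hc) d (hPQ hd) h⟩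

end Rec
section Recurrence
variable {n : ℕ}

lemma rows_bound {b : Fin (n+1) → ℕ} (hb : Monotone b) (i : Fin n) :
    (b ∘ Fin.castSucc) i ≤ b (Fin.last n) := hb (Fin.le_last _)

lemma last_not_mem_map {Q : Finset (Fin n × ℕ)} (r : ℕ) :
    (Fin.last n, r) ∉ Q.map (cellEmb n) := by
  intro h
  obtain ⟨x, _, hex⟩ := Finset.mem_map.mp h
  have : (x.1.castSucc : Fin (n+1)) = Fin.last n := congrArg Prod.fst hex
  exact absurd this (Fin.castSucc_lt_last x.1).ne

lemma rook_recurrence (b : Fin (n+1) → ℕ) (hb : Monotone b) (m : ℕ) :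
    rookNum b (m+1) = rookNum (b ∘ Fin.castSucc) (m+1)
      + (b (Fin.last n) - m) * rookNum (b ∘ Fin.castSucc) m := by
  classical
  set c := b (Fin.last n) with hc
  set b' := b ∘ Fin.castSucc with hb'
  rw [rookNum_eq_card, rookNum_eq_card, rookNum_eq_card]
  have hsplit := Finset.card_filter_add_card_filter_not
    (s := placements b (m+1)) (p := fun P => ∀ r, (Fin.last n, r) ∉ P)
  have hNoLast : ((placements b (m+1)).filter (fun P => ∀ r, (Fin.last n, r) ∉ P)).card
      = (placements b' (m+1)).card := by
    apply Finset.card_bij' (fun P _ => unmapCells P) (fun Q _ => Q.map (cellEmb n))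
    · intro P hP
      rw [Finset.mem_filter, mem_placements] at hP
      obtain ⟨⟨hpl, hcard⟩, hno⟩ := hP
      have hmap := map_unmapCells hno
      rw [mem_placements]
      refine ⟨isRookPlacement_unmap (by rwa [hmap]), ?_⟩
      have h2 := congrArg Finset.card hmap
      rw [Finset.card_map] at h2
      rw [h2, hcard]
    · intro Q hQ
      rw [mem_placements] at hQ
      rw [Finset.mem_filter, mem_placements]
      refine ⟨⟨isRookPlacement_map hQ.1, by rw [Finset.card_map]; exact hQ.2⟩, ?_⟩
      intro r
      exact last_not_mem_map r
    · intro P hP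
      rw [Finset.mem_filter] at hP
      exact map_unmapCells hP.2
    · intro Q _
      exact unmapCells_map Q
  have hWithLast : ((placements b (m+1)).filter (fun P => ¬ ∀ r, (Fin.last n, r) ∉ P)).card
      = (c - m) * (placements b' m).card := by
    have hbiU : ((placements b (m+1)).filter (fun P => ¬ ∀ r, (Fin.last n, r) ∉ P))
        = (placements b' m).biUnion (fun Q =>
            ((Finset.range c) \ (Q.image Prod.snd)).image
              (fun r => insert (Fin.last n, r) (Q.map (cellEmb n)))) := by
      ext P
      rw [Finset.mem_filter, mem_placements, Finset.mem_biUnion]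
      constructor
      · rintro ⟨⟨hpl, hcard⟩, hex⟩
        push_neg at hex
        obtain ⟨r, hr⟩ := hex
        have hno : ∀ r', (Fin.last n, r') ∉ P.erase (Fin.last n, r) := by
          intro r' hr'
          have hne := Finset.ne_of_mem_erase hr'
          have hmem := Finset.mem_of_mem_erase hr'
          exact (hpl.2 _ hmem _ hr (by exact hne)).1 rfl
        have hmap := map_unmapCells hno
        have hcard0 : (P.erase (Fin.last n, r)).card = m := by
          rw [Finset.card_erase_of_mem hr, hcard]
          omega
        have hcardQ : (unmapCells (P.erase (Fin.last n, r))).card = m := by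
          have h2 := congrArg Finset.card hmap
          rw [Finset.card_map] at h2
          rw [h2, hcard0]
        have hQ0sub : P.erase (Fin.last n, r) ⊆ P := Finset.erase_subset _ _
        have hplQ : IsRookPlacement b' (unmapCells (P.erase (Fin.last n, r))) :=
          isRookPlacement_unmap (by rw [hmap]; exact isRookPlacement_subset hQ0sub hpl)
        refine ⟨unmapCells (P.erase (Fin.last n, r)), mem_placements.mpr ⟨hplQ, hcardQ⟩, ?_⟩
        rw [Finset.mem_image]
        refine ⟨r, ?_, ?_⟩
        · rw [Finset.mem_sdiff, Finset.mem_range]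
          constructor
          · exact hpl.1 _ hr
          · intro hrow
            obtain ⟨x, hx, hxr⟩ := Finset.mem_image.mp hrow
            have hxP : (x.1.castSucc, x.2) ∈ P := by
              apply hQ0sub
              rw [← hmap]
              exact Finset.mem_map_of_mem _ hx
            have hne : ((x.1.castSucc : Fin (n+1)), x.2) ≠ (Fin.last n, r) := by
              intro hEq
              have : (x.1.castSucc : Fin (n+1)) = Fin.last n := congrArg Prod.fst hEq
              exact absurd this (Fin.castSucc_lt_last x.1).ne
            exact (hpl.2 _ hxP _ hr hne).2 hxr
        · rw [hmap, Finset.insert_erase hr]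
      · rintro ⟨Q, hQ, hP⟩
        rw [mem_placements] at hQ
        obtain ⟨hplQ, hcardQ⟩ := hQ
        rw [Finset.mem_image] at hP
        obtain ⟨r, hrmem, rfl⟩ := hP
        rw [Finset.mem_sdiff, Finset.mem_range] at hrmem
        obtain ⟨hrc, hrnot⟩ := hrmem
        have hnotin : (Fin.last n, r) ∉ Q.map (cellEmb n) := last_not_mem_map r
        have hplmap := isRookPlacement_map hplQ
        refine ⟨⟨?_, ?_⟩, ?_⟩
        · constructor
          · intro x hx
            rcases Finset.mem_insert.mp hx with h | h
            · rw [h]; exact hrc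
            · exact hplmap.1 x h
          · intro x hx y hy hxy
            rcases Finset.mem_insert.mp hx with h1 | h1 <;>
              rcases Finset.mem_insert.mp hy with h2 | h2
            · exact absurd (h1.trans h2.symm) hxy
            · subst h1
              obtain ⟨z, hz, rfl⟩ := Finset.mem_map.mp h2
              constructor
              · exact fun h => absurd h.symm (Fin.castSucc_lt_last z.1).ne
              · intro h
                exact hrnot (Finset.mem_image.mpr ⟨z, hz, h.symm⟩)
            · subst h2
              obtain ⟨z, hz, rfl⟩ := Finset.mem_map.mp h1
              constructor
              · exact fun h => absurd h (Fin.castSucc_lt_last z.1).ne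
              · intro h
                exact hrnot (Finset.mem_image.mpr ⟨z, hz, h⟩)
            · exact hplmap.2 x h1 y h2 hxy
        · rw [Finset.card_insert_of_notMem hnotin, Finset.card_map, hcardQ]
        · push_neg
          exact ⟨r, Finset.mem_insert_self _ _⟩
    rw [hbiU, Finset.card_biUnion]
    · have hinner : ∀ Q ∈ placements b' m,
          (((Finset.range c) \ (Q.image Prod.snd)).image
            (fun r => insert (Fin.last n, r) (Q.map (cellEmb n)))).card = c - m := by
        intro Q hQ
        rw [mem_placements] at hQ
        rw [Finset.card_image_of_injOn]
        · rw [Finset.card_sdiff_of_subset]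
          · rw [card_image_snd hQ.1, hQ.2, Finset.card_range]
          · exact rows_subset_range hQ.1 (rows_bound hb)
        · intro r1 _ r2 _ hEq
          have hEq' : insert (Fin.last n, r1) (Q.map (cellEmb n))
              = insert (Fin.last n, r2) (Q.map (cellEmb n)) := hEq
          have h1 : (Fin.last n, r1) ∈ insert (Fin.last n, r2) (Q.map (cellEmb n)) := by
            rw [← hEq']; exact Finset.mem_insert_self _ _
          rcases Finset.mem_insert.mp h1 with h | h
          · exact congrArg Prod.snd h
          · exact absurd h (last_not_mem_map r1)
      rw [Finset.sum_congr rfl hinner, Finset.sum_const, smul_eq_mul, Nat.mul_comm]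
    · intro Q1 hQ1 Q2 hQ2 hne
      simp only [Finset.disjoint_left]
      intro P hP1 hP2
      rw [Finset.mem_image] at hP1 hP2
      obtain ⟨r1, hr1, hPe1⟩ := hP1
      obtain ⟨r2, hr2, hPe2⟩ := hP2
      have hl1 : (Fin.last n, r1) ∈ P := by rw [← hPe1]; exact Finset.mem_insert_self _ _
      have hr12 : r1 = r2 := by
        rw [← hPe2] at hl1
        rcases Finset.mem_insert.mp hl1 with h | h
        · exact congrArg Prod.snd h
        · exact absurd h (last_not_mem_map r1)
      subst hr12
      apply hne
      have e1 : Q1.map (cellEmb n) = P.erase (Fin.last n, r1) := by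
        rw [← hPe1, Finset.erase_insert (last_not_mem_map r1)]
      have e2 : Q2.map (cellEmb n) = P.erase (Fin.last n, r1) := by
        rw [← hPe2, Finset.erase_insert (last_not_mem_map r1)]
      exact Finset.map_injective (cellEmb n) (e1.trans e2.symm)
  omega

end Recurrence

/-- falling factorial as integer-valued function -/
def ff (m : ℕ) (x : ℤ) : ℤ := ∏ t ∈ Finset.range m, (x - t)

lemma ff_zero (x : ℤ) : ff 0 x = 1 := rfl

lemma ff_succ (m : ℕ) (x : ℤ) : ff (m+1) x = ff m x * (x - m) := Finset.prod_range_succ _ _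

lemma monotone_comp_castSucc {n : ℕ} {b : Fin (n+1) → ℕ} (hb : Monotone b) :
    Monotone (b ∘ Fin.castSucc) :=
  fun i j hij => hb (by simpa using hij)

lemma rook_recurrence_int {n : ℕ} (b : Fin (n+1) → ℕ) (hb : Monotone b) (m : ℕ) :
    (rookNum b (m+1) : ℤ) = (rookNum (b ∘ Fin.castSucc) (m+1) : ℤ)
      + ((b (Fin.last n) : ℤ) - m) * (rookNum (b ∘ Fin.castSucc) m : ℤ) := by
  rcases le_or_gt m (b (Fin.last n)) with h | h
  · rw [rook_recurrence b hb m]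
    push_cast [Nat.cast_sub h]
    ring
  · have hz : rookNum (b ∘ Fin.castSucc) m = 0 :=
      rookNum_eq_zero_of_rows _ m (rows_bound hb) h
    rw [rook_recurrence b hb m, hz]
    push_cast
    ring

lemma gen_identity {n : ℕ} (b : Fin n → ℕ) (hb : Monotone b) (x : ℤ) :
    ∑ k ∈ Finset.range (n+1), (rookNum b k : ℤ) * ff (n - k) x
      = ∏ i : Fin n, (x + (b i : ℤ) - (i : ℤ)) := by
  induction n with
  | zero => simp [rookNum_zero, ff_zero]
  | succ n ih =>
    set b' := b ∘ Fin.castSucc with hb'def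
    have hb'mono := monotone_comp_castSucc hb
    have hRHS : ∏ i : Fin (n+1), (x + (b i : ℤ) - (i : ℤ))
        = (∏ i : Fin n, (x + (b' i : ℤ) - (i : ℤ))) * (x + (b (Fin.last n) : ℤ) - n) := by
      rw [Fin.prod_univ_castSucc]
      simp [hb'def]
    rw [hRHS, ← ih b' hb'mono]
    -- LHS: peel first term
    rw [Finset.sum_range_succ']
    -- now transform
    have hstep : ∀ m ∈ Finset.range (n+1),
        (rookNum b (m+1) : ℤ) * ff (n + 1 - (m+1)) x
        = (rookNum b' (m+1) : ℤ) * ff (n - m) x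
          + ((b (Fin.last n) : ℤ) - m) * (rookNum b' m : ℤ) * ff (n - m) x := by
      intro m _
      rw [Nat.succ_sub_succ, rook_recurrence_int b hb m]
      ring
    rw [Finset.sum_congr rfl hstep, Finset.sum_add_distrib]
    -- RHS expansion
    have hRHS2 : (∑ k ∈ Finset.range (n+1), (rookNum b' k : ℤ) * ff (n - k) x)
        * (x + (b (Fin.last n) : ℤ) - n)
        = ∑ k ∈ Finset.range (n+1), (rookNum b' k : ℤ) * ff (n + 1 - k) x
          + ∑ k ∈ Finset.range (n+1),
              ((b (Fin.last n) : ℤ) - k) * (rookNum b' k : ℤ) * ff (n - k) x := by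
      rw [Finset.sum_mul, ← Finset.sum_add_distrib]
      apply Finset.sum_congr rfl
      intro k hk
      rw [Finset.mem_range] at hk
      have hk' : k ≤ n := Nat.lt_succ_iff.mp hk
      have h1 : n + 1 - k = (n - k) + 1 := by omega
      rw [h1, ff_succ]
      have h2 : ((n - k : ℕ) : ℤ) = (n : ℤ) - k := by
        rw [Nat.cast_sub hk']
      rw [h2]
      ring
    rw [hRHS2]
    -- match the two sides
    have hA : ∑ m ∈ Finset.range (n+1), (rookNum b' (m+1) : ℤ) * ff (n - m) x
        + (rookNum b 0 : ℤ) * ff (n + 1 - 0) x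
        = ∑ k ∈ Finset.range (n+1), (rookNum b' k : ℤ) * ff (n + 1 - k) x := by
      rw [Finset.sum_range_succ' (fun k => (rookNum b' k : ℤ) * ff (n + 1 - k) x) n]
      rw [Finset.sum_range_succ (fun m => (rookNum b' (m+1) : ℤ) * ff (n - m) x) n]
      rw [rookNum_eq_zero_of_gt b' (n+1) (Nat.lt_succ_self n), rookNum_zero b, rookNum_zero b']
      push_cast
      ring
    linarith [hA]

lemma ff_self_ne_zero (m : ℕ) : ff m (m : ℤ) ≠ 0 := by
  apply ne_of_gt
  apply Finset.prod_pos
  intro t ht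
  rw [Finset.mem_range] at ht
  have : (t : ℤ) < (m : ℤ) := by exact_mod_cast ht
  omega

lemma ff_cast_eq_zero {t m : ℕ} (h : m < t) : ff t (m : ℤ) = 0 := by
  apply Finset.prod_eq_zero (Finset.mem_range.mpr h)
  simp

lemma extraction {n : ℕ} (d : ℕ → ℤ)
    (h : ∀ x : ℤ, ∑ k ∈ Finset.range (n+1), d k * ff (n - k) x = 0) :
    ∀ k ≤ n, d k = 0 := by
  have key : ∀ m, m ≤ n → d (n - m) = 0 := by
    intro m
    induction m using Nat.strong_induction_on with
    | _ m ih =>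
      intro hm
      have h0 := h (m : ℤ)
      rw [Finset.sum_eq_single (n - m)] at h0
      · have hnm : n - (n - m) = m := by omega
        rw [hnm] at h0
        exact (mul_eq_zero.mp h0).resolve_right (ff_self_ne_zero m)
      · intro k hk hne
        rw [Finset.mem_range] at hk
        rcases lt_or_gt_of_ne (show n - k ≠ m by omega) with hlt | hgt
        · have : d k = 0 := by
            have := ih (n - k) hlt (by omega)
            rwa [show n - (n - k) = k by omega] at this
          rw [this, zero_mul]
        · rw [ff_cast_eq_zero hgt, mul_zero]
      · intro hnot
        exact absurd (Finset.mem_range.mpr (by omega)) hnot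
  intro k hk
  have := key (n - k) (by omega)
  rwa [show n - (n - k) = k by omega] at this

/-- The root vector of a board: the (0-indexed) `i`-th entry is `i - b i`
(1-indexed: `(i-1) - b_i`). -/
def rootVec {n : ℕ} (b : Fin n → ℕ) : Fin n → ℤ := fun i => (i : ℤ) - (b i : ℤ)

lemma prod_rootVec {n : ℕ} (b : Fin n → ℕ) (x : ℤ) :
    ∏ i : Fin n, (x + (b i : ℤ) - (i : ℤ))
      = ((Finset.univ.val.map (rootVec b)).map (fun v => x - v)).prod := by
  rw [Multiset.map_map]
  rw [Finset.prod_eq_multiset_prod]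
  apply congrArg
  apply Multiset.map_congr rfl
  intro i _
  simp [rootVec, Function.comp]
  ring

theorem rookEquiv_of_rootVec_multiset {n : ℕ} (b₁ b₂ : Fin n → ℕ)
    (h₁ : Monotone b₁) (h₂ : Monotone b₂)
    (h : Finset.univ.val.map (rootVec b₁) = Finset.univ.val.map (rootVec b₂)) :
    RookEquiv b₁ b₂ := by
  intro k
  rcases le_or_gt k n with hk | hk
  · have hprod : ∀ x : ℤ, ∏ i : Fin n, (x + (b₁ i : ℤ) - (i : ℤ))
        = ∏ i : Fin n, (x + (b₂ i : ℤ) - (i : ℤ)) := by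
      intro x
      rw [prod_rootVec, prod_rootVec, h]
    have hzero : ∀ x : ℤ, ∑ j ∈ Finset.range (n+1),
        ((rookNum b₁ j : ℤ) - (rookNum b₂ j : ℤ)) * ff (n - j) x = 0 := by
      intro x
      have e1 := gen_identity b₁ h₁ x
      have e2 := gen_identity b₂ h₂ x
      have : ∑ j ∈ Finset.range (n+1),
          ((rookNum b₁ j : ℤ) - (rookNum b₂ j : ℤ)) * ff (n - j) x
          = (∑ j ∈ Finset.range (n+1), (rookNum b₁ j : ℤ) * ff (n - j) x)
            - ∑ j ∈ Finset.range (n+1), (rookNum b₂ j : ℤ) * ff (n - j) x := by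
        rw [← Finset.sum_sub_distrib]
        apply Finset.sum_congr rfl
        intro j _
        ring
      rw [this, e1, e2, hprod x, sub_self]
    have := extraction _ hzero k hk
    omega
  · rw [rookNum_eq_zero_of_gt b₁ k hk, rookNum_eq_zero_of_gt b₂ k hk]

/-- `b₁` is obtained from `b₂` by moving `k > 0` squares out of one column into a
single other column: the boards agree except in columns `i` and `j`, where `b₁`
has `k` more squares in column `i` and `k` fewer in column `j`. -/
def MovesSquares {n : ℕ} (b₁ b₂ : Fin n → ℕ) : Prop :=
  ∃ (i j : Fin n) (k : ℕ), i ≠ j ∧ 0 < k ∧ b₁ i = b₂ i + k ∧ b₂ j = b₁ j + k ∧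
    ∀ l, l ≠ i → l ≠ j → b₁ l = b₂ l

lemma swap_step {n : ℕ} (b : Fin n → ℕ) (hb : Monotone b) (p q : Fin n)
    (hpq : p < q) (hval : rootVec b p < rootVec b q)
    (hppos : 0 < p.val)
    (hleft : ∀ l : Fin n, l.val + 1 = p.val → rootVec b q ≤ rootVec b l + 1)
    (hright : ∀ l, q < l → rootVec b l ≤ rootVec b p) :
    ∃ b' : Fin n → ℕ, Monotone b' ∧ MovesSquares b' b ∧
      (∀ l, l ≠ p → l ≠ q → b' l = b l) ∧
      (Finset.univ.val.map (rootVec b') = Finset.univ.val.map (rootVec b)) ∧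
      (∑ i, b' i * (n - i.val)) + ((rootVec b q - rootVec b p).toNat) * (q.val - p.val)
        = ∑ i, b i * (n - i.val) := by
  have hξ : ∀ l : Fin n, rootVec b l = (l : ℤ) - (b l : ℤ) := fun l => rfl
  set ξ := rootVec b with hξdef
  set d : ℕ := (ξ q - ξ p).toNat with hddef
  have hd : (d : ℤ) = ξ q - ξ p := Int.toNat_of_nonneg (by omega)
  have hdpos : 0 < d := by omega
  -- the predecessor of p
  have hpn : p.val - 1 < n := by omega
  set pl : Fin n := ⟨p.val - 1, hpn⟩ with hpl
  have hplp : pl.val + 1 = p.val := by simp [hpl]; omega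
  have hql : ξ q ≤ ξ pl + 1 := hleft pl hplp
  have hplval : pl.val = p.val - 1 := rfl
  have hplz : (pl : ℤ) = (p : ℤ) - 1 := by
    have := hplval
    omega
  have hxp := hξ p
  have hxq := hξ q
  have hxpl := hξ pl
  have hbp : (d : ℤ) ≤ (b p : ℤ) := by linarith
  have hbpd : d ≤ b p := by exact_mod_cast hbp
  set b' : Fin n → ℕ := Function.update (Function.update b p (b p - d)) q (b q + d) with hb'def
  have hb'p : b' p = b p - d := by
    rw [hb'def, Function.update_of_ne (Fin.ne_of_lt hpq), Function.update_self]
  have hb'q : b' q = b q + d := by rw [hb'def, Function.update_self]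
  have hb'other : ∀ l, l ≠ p → l ≠ q → b' l = b l := by
    intro l hlp hlq
    rw [hb'def, Function.update_of_ne hlq, Function.update_of_ne hlp]
  have hzb'p : (b' p : ℤ) = (b p : ℤ) - d := by rw [hb'p]; push_cast [hbpd]; ring
  have hzb'q : (b' q : ℤ) = (b q : ℤ) + d := by rw [hb'q]; push_cast; ring
  -- root vector of b'
  have hrv : rootVec b' = ξ ∘ (Equiv.swap p q) := by
    funext l
    rcases eq_or_ne l p with rfl | hlp
    · rw [Function.comp_apply, Equiv.swap_apply_left]
      show (l : ℤ) - (b' l : ℤ) = ξ q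
      rw [hzb'p]
      have h1 := hξ l
      linarith
    rcases eq_or_ne l q with rfl | hlq
    · rw [Function.comp_apply, Equiv.swap_apply_right]
      show (l : ℤ) - (b' l : ℤ) = ξ p
      rw [hzb'q]
      have h1 := hξ l
      linarith
    · rw [Function.comp_apply, Equiv.swap_apply_of_ne_of_ne hlp hlq]
      show (l : ℤ) - (b' l : ℤ) = ξ l
      rw [hb'other l hlp hlq]
      exact (hξ l).symm
  -- preliminary bounds
  have hG1 : (b pl : ℤ) ≤ (b' p : ℤ) := by
    rw [hzb'p]; linarith
  have hG2 : (b' p : ℤ) ≤ (b p : ℤ) := by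
    rw [hzb'p]; linarith
  have hG3 : (b q : ℤ) ≤ (b' q : ℤ) := by
    rw [hzb'q]; linarith
  have hG4 : ∀ l, q < l → (b' q : ℤ) ≤ (b l : ℤ) := by
    intro l hl
    have h1 := hright l hl
    have h2 := hξ l
    have hlq : (q : ℤ) < (l : ℤ) := by exact_mod_cast hl
    rw [hzb'q]
    linarith
  have hmono : Monotone b' := by
    intro i k hik
    rcases eq_or_lt_of_le hik with rfl | hik'
    · exact le_refl _
    have hikz : (i : ℤ) < (k : ℤ) := by exact_mod_cast hik'
    have key : (b' i : ℤ) ≤ (b' k : ℤ) := by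
      rcases eq_or_ne i p with rfl | hip
      · -- i = p
        rcases eq_or_ne k q with rfl | hkq
        · calc (b' i : ℤ) ≤ b i := hG2
            _ ≤ b k := by exact_mod_cast hb hik
            _ ≤ b' k := hG3
        · have hkp : k ≠ i := (Fin.ne_of_lt hik').symm
          rw [hb'other k hkp hkq]
          calc (b' i : ℤ) ≤ b i := hG2
            _ ≤ b k := by exact_mod_cast hb hik
      rcases eq_or_ne i q with hiq | hiq
      · -- i = q, k > i = q
        have hqk : q < k := by rw [← hiq]; exact hik'
        have hkp : k ≠ p := fun h => absurd (h ▸ hqk) (by exact fun hh => absurd (hpq.trans hh) (lt_irrefl _))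
        have hkq : k ≠ q := by
          intro h; rw [h] at hqk; exact absurd hqk (lt_irrefl _)
        rw [hb'other k hkp hkq, hiq]
        exact hG4 k hqk
      · -- i not p,q
        rw [hb'other i hip hiq]
        rcases eq_or_ne k p with hkp | hkp
        · -- k = p, i < p so i ≤ pl
          have hipl : i ≤ pl := by
            have h1 : i.val < p.val := by rw [← hkp]; exact hik'
            simp only [Fin.le_def, hpl]
            omega
          rw [hkp]
          calc (b i : ℤ) ≤ b pl := by exact_mod_cast hb hipl
            _ ≤ b' p := hG1
        rcases eq_or_ne k q with hkq | hkq
        · rw [hkq]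
          calc (b i : ℤ) ≤ b q := by exact_mod_cast hb (le_of_lt (lt_of_lt_of_le hik' (by rw [hkq])))
            _ ≤ b' q := hG3
        · rw [hb'other k hkp hkq]
          exact_mod_cast hb hik
    exact_mod_cast key
  refine ⟨b', hmono, ?_, hb'other, ?_, ?_⟩
  · exact ⟨q, p, d, (Fin.ne_of_lt hpq).symm, hdpos, hb'q, by omega,
      fun l h1 h2 => hb'other l h2 h1⟩
  · rw [hrv, ← Multiset.map_map]
    congr 1
    have h := congrArg Finset.val (Finset.map_univ_equiv (Equiv.swap p q))
    simpa using h
  · -- potential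
    have hwk : ∀ l : Fin n, ((n - l.val : ℕ) : ℤ) = (n : ℤ) - (l : ℤ) := by
      intro l
      have := l.isLt
      push_cast [Nat.cast_sub this.le]
      ring
    have hz : (∑ i, (b' i : ℤ) * ((n - i.val : ℕ) : ℤ))
        + (d : ℤ) * (((q.val - p.val : ℕ)) : ℤ) = ∑ i, (b i : ℤ) * ((n - i.val : ℕ) : ℤ) := by
      have hsummand : ∀ l : Fin n, (b' l : ℤ) * ((n - l.val : ℕ) : ℤ)
          = (b l : ℤ) * ((n - l.val : ℕ) : ℤ)
            + (if l = p then -(d:ℤ) * ((n:ℤ) - p) else 0)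
            + (if l = q then (d:ℤ) * ((n:ℤ) - q) else 0) := by
        intro l
        rcases eq_or_ne l p with rfl | hlp
        · rw [if_pos rfl, if_neg (Fin.ne_of_lt hpq), hwk l, hzb'p]; ring
        rcases eq_or_ne l q with rfl | hlq
        · rw [if_neg hlp, if_pos rfl, hwk l, hzb'q]; ring
        · rw [if_neg hlp, if_neg hlq, hb'other l hlp hlq]; ring
      rw [Finset.sum_congr rfl (fun l _ => hsummand l)]
      rw [Finset.sum_add_distrib, Finset.sum_add_distrib, Finset.sum_ite_eq' Finset.univ p,
        Finset.sum_ite_eq' Finset.univ q]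
      simp only [Finset.mem_univ, if_true]
      have hqp : ((q.val - p.val : ℕ) : ℤ) = (q : ℤ) - (p : ℤ) := by
        have : p.val ≤ q.val := le_of_lt hpq
        push_cast [Nat.cast_sub this]
        ring
      rw [hqp]
      ring
    exact_mod_cast hz

/-- A Ferrers board with `n` columns: a weakly increasing sequence of column heights. -/
def FerrersBoard (n : ℕ) : Type := {b : Fin n → ℕ // Monotone b}

/-- The rook equivalence graph of the equivalence class of `B`: vertices are the
Ferrers boards with `n` columns rook equivalent to `B`; two distinct boards are
adjacent when one is obtained from the other by moving squares out of one column
into a single other column. -/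
def rookEquivGraph {n : ℕ} (B : FerrersBoard n) :
    SimpleGraph {C : FerrersBoard n // RookEquiv C.1 B.1} :=
  SimpleGraph.fromRel fun C D => MovesSquares C.1.1 D.1.1

/-- `entryCount b k` is `v_k`, the number of entries of the root vector of `b`
equal to `k`. -/
def entryCount {n : ℕ} (b : Fin n → ℕ) (k : ℕ) : ℕ :=
  (Finset.univ.filter fun l => rootVec b l = (k : ℤ)).card

lemma max_of_multiset {n : ℕ} {f g : Fin n → ℤ} {M : ℤ}
    (h : Finset.univ.val.map f = Finset.univ.val.map g)
    (hM : ∀ i, g i ≤ M) : ∀ i, f i ≤ M := by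
  intro i
  have hmem : f i ∈ Finset.univ.val.map f :=
    Multiset.mem_map_of_mem f (Finset.mem_univ i)
  rw [h] at hmem
  obtain ⟨i', _, hi'⟩ := Multiset.mem_map.mp hmem
  rw [← hi']
  exact hM i'

lemma sort_main {n : ℕ} (B : FerrersBoard n) (M : ℤ) (j : Fin n)
    (hmax : ∀ i, rootVec B.1 i ≤ M) (hj : rootVec B.1 j = M) :
    ∀ (N : ℕ) (C : {C : FerrersBoard n // RookEquiv C.1 B.1}),
      (∑ i, C.1.1 i * (n - i.val)) ≤ N →
      Finset.univ.val.map (rootVec C.1.1) = Finset.univ.val.map (rootVec B.1) →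
      (∀ i ≤ j, rootVec C.1.1 i = rootVec B.1 i) →
      ∃ B' : {C : FerrersBoard n // RookEquiv C.1 B.1},
        (rookEquivGraph B).Reachable C B' ∧
        (∀ i ≤ j, rootVec B'.1.1 i = rootVec B.1 i) ∧
        (∀ i₁ i₂ : Fin n, j ≤ i₁ → i₁ ≤ i₂ → rootVec B'.1.1 i₂ ≤ rootVec B'.1.1 i₁) := by
  intro N
  induction N using Nat.strong_induction_on with
  | _ N ih =>
    intro C hΦ hmult hpre
    classical
    have hmaxC : ∀ i, rootVec C.1.1 i ≤ M := max_of_multiset hmult hmax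
    have hCj : rootVec C.1.1 j = M := by rw [hpre j (le_refl j), hj]
    by_cases hdef : ∃ p q : Fin n, j < p ∧ p < q ∧ rootVec C.1.1 p < rootVec C.1.1 q
    · -- there is a defect: swap and recurse
      obtain ⟨p0, q0, hjp0, hpq0, hv0⟩ := hdef
      set ξ := rootVec C.1.1 with hξdef
      set S := Finset.univ.filter
        (fun p : Fin n => j < p ∧ ∃ q : Fin n, p < q ∧ ξ p < ξ q) with hSdef
      have hSne : S.Nonempty := ⟨p0, Finset.mem_filter.mpr ⟨Finset.mem_univ _, hjp0, q0, hpq0, hv0⟩⟩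
      set p := S.min' hSne with hpdef
      have hpS := S.min'_mem hSne
      rw [Finset.mem_filter] at hpS
      obtain ⟨_, hjp, q1, hpq1, hv1⟩ := hpS
      rw [← hpdef] at hjp hpq1 hv1
      set T := Finset.univ.filter (fun r : Fin n => p < r ∧ ξ p < ξ r) with hTdef
      have hTne : T.Nonempty := ⟨q1, Finset.mem_filter.mpr ⟨Finset.mem_univ _, hpq1, hv1⟩⟩
      set q := T.max' hTne with hqdef
      have hqT := T.max'_mem hTne
      rw [Finset.mem_filter] at hqT
      obtain ⟨_, hpq, hval⟩ := hqT
      rw [← hqdef] at hpq hval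
      have hright : ∀ l, q < l → ξ l ≤ ξ p := by
        intro l hl
        by_contra hcon
        push_neg at hcon
        have hlT : l ∈ T := Finset.mem_filter.mpr ⟨Finset.mem_univ _, hpq.trans hl, hcon⟩
        exact absurd (T.le_max' l hlT) (not_le.mpr hl)
      have hppos : 0 < p.val := lt_of_le_of_lt (Nat.zero_le j.val) hjp
      have hleft : ∀ l : Fin n, l.val + 1 = p.val → ξ q ≤ ξ l + 1 := by
        intro l hl
        have hlp : l < p := by rw [Fin.lt_def]; omega
        rcases lt_or_ge j l with hjl | hlj
        · -- l not in S by minimality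
          have hlS : l ∉ S := fun hmem => absurd (S.min'_le l hmem) (not_le.mpr hlp)
          rw [hSdef, Finset.mem_filter] at hlS
          push_neg at hlS
          have := hlS (Finset.mem_univ l) hjl q (hlp.trans hpq)
          omega
        · -- l = j
          have hlj' : l = j := by
            have h1 : j.val < p.val := hjp
            have h2 : l.val ≤ j.val := hlj
            rw [Fin.ext_iff]; omega
          rw [hlj', hCj]
          have := hmaxC q
          omega
      obtain ⟨b', hmono', hmoves, hother, hmult', hpot⟩ :=
        swap_step C.1.1 C.1.2 p q hpq hval hppos hleft hright
      rw [← hξdef] at hpot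
      have hmultB : Finset.univ.val.map (rootVec b') = Finset.univ.val.map (rootVec B.1) :=
        hmult'.trans hmult
      set C' : {C : FerrersBoard n // RookEquiv C.1 B.1} :=
        ⟨⟨b', hmono'⟩, rookEquiv_of_rootVec_multiset b' B.1 hmono' B.2 hmultB⟩ with hC'def
      -- adjacency
      have hbne : b' ≠ C.1.1 := by
        obtain ⟨i, jj, k, hij, hk, h1, h2, h3⟩ := hmoves
        intro h
        rw [h] at h1
        omega
      have hadj : (rookEquivGraph B).Adj C C' := by
        refine ⟨?_, Or.inr hmoves⟩
        intro h
        exact hbne (congrArg (fun X : {C : FerrersBoard n // RookEquiv C.1 B.1} => X.1.1) h.symm)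
      -- potential decrease
      have hd1 : 0 < (ξ q - ξ p).toNat := by omega
      have hd2 : 0 < q.val - p.val := by
        have : p.val < q.val := hpq
        omega
      have hΦ' : (∑ i, C'.1.1 i * (n - i.val)) < N := by
        have h1 : (∑ i, b' i * (n - i.val)) < ∑ i, C.1.1 i * (n - i.val) := by
          have := Nat.mul_pos hd1 hd2
          omega
        calc (∑ i, C'.1.1 i * (n - i.val)) = ∑ i, b' i * (n - i.val) := rfl
          _ < ∑ i, C.1.1 i * (n - i.val) := h1
          _ ≤ N := hΦ
      have hpre' : ∀ i ≤ j, rootVec C'.1.1 i = rootVec B.1 i := by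
        intro i hi
        have hip : i ≠ p := by
          intro h
          rw [h] at hi
          exact absurd hjp (not_lt.mpr hi)
        have hiq : i ≠ q := by
          intro h
          rw [h] at hi
          exact absurd (hjp.trans hpq) (not_lt.mpr hi)
        have : C'.1.1 i = C.1.1 i := hother i hip hiq
        rw [show rootVec C'.1.1 i = (i : ℤ) - (C'.1.1 i : ℤ) from rfl, this]
        exact hpre i hi
      obtain ⟨B', hreach, hp1, hp2⟩ :=
        ih (∑ i, C'.1.1 i * (n - i.val)) hΦ' C' (le_refl _) hmultB hpre'
      exact ⟨B', (hadj.reachable).trans hreach, hp1, hp2⟩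
    · -- no defect: C itself works
      push_neg at hdef
      refine ⟨C, SimpleGraph.Reachable.refl C, hpre, ?_⟩
      intro i₁ i₂ h1 h2
      rcases eq_or_lt_of_le h2 with rfl | h2'
      · exact le_refl _
      rcases eq_or_lt_of_le h1 with h1' | h1'
      · rw [← h1', hCj]
        exact hmaxC i₂
      · exact hdef i₁ i₂ h1' h2'

/-- every Ferrers board is connected by a path in its rook
equivalence graph to a board whose root vector agrees with the original in the
first `j` positions (where position `j`, 0-indexed, holds the leftmost maximum
entry `M`) and is weakly decreasing from position `j` on. -/
theorem stmt2 {n : ℕ} (B : FerrersBoard n) (M : ℤ) (j : Fin n)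
    (hmax : ∀ i, rootVec B.1 i ≤ M)
    (hj : rootVec B.1 j = M)
    (hfirst : ∀ i < j, rootVec B.1 i ≠ M) :
    ∃ B' : {C : FerrersBoard n // RookEquiv C.1 B.1},
      (rookEquivGraph B).Reachable ⟨B, fun _ => rfl⟩ B' ∧
      (∀ i ≤ j, rootVec B'.1.1 i = rootVec B.1 i) ∧
      (∀ i₁ i₂ : Fin n, j ≤ i₁ → i₁ ≤ i₂ → rootVec B'.1.1 i₂ ≤ rootVec B'.1.1 i₁) := by
  obtain ⟨B', hreach, h1, h2⟩ := sort_main B M j hmax hj (∑ i, B.1 i * (n - i.val))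
    ⟨B, fun _ => rfl⟩ (le_refl _) rfl (fun i _ => rfl)
  exact ⟨B', hreach, h1, h2⟩
end

section
/- For any integer n > 0, the complete graph K_n on n vertices is isomorphic to the rook equivalence graph G(B) of the Ferrers board B = (0, 1, 2, …, n−1, n−1) with n+1 columns (column heights b_i = i−1 for 1 ≤ i ≤ n and b_{n+1} = n−1). -/
open Finset

noncomputable section RookAux

open Classical in
/-- partial placements as option-valued functions -/
def optSet {m : ℕ} (b : Fin m → ℕ) : Finset (Fin m → Option ℕ) :=
  (Fintype.piFinset fun i => insert none ((Finset.range (b i)).image some)).filter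
    (fun p => ∀ i j r, p i = some r → p j = some r → i = j)

open Classical in
def supp {m : ℕ} (p : Fin m → Option ℕ) : Finset (Fin m) :=
  univ.filter fun i => (p i).isSome

lemma mem_optSet {m : ℕ} {b : Fin m → ℕ} {p : Fin m → Option ℕ} :
    p ∈ optSet b ↔ (∀ i r, p i = some r → r < b i) ∧
      (∀ i j r, p i = some r → p j = some r → i = j) := by
  classical
  rw [optSet, mem_filter, Fintype.mem_piFinset]
  apply and_congr_left'
  constructor
  · intro h i r hir
    have := h i
    rw [hir] at this
    simpa using this
  · intro h i
    cases hp : p i with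
    | none => simp
    | some r => simpa using h i r hp

def toP {m : ℕ} (p : Fin m → Option ℕ) : Finset (Fin m × ℕ) :=
  (supp p).image fun i => (i, (p i).getD 0)

lemma mem_toP {m : ℕ} {p : Fin m → Option ℕ} {i : Fin m} {r : ℕ} :
    (i, r) ∈ toP p ↔ p i = some r := by
  classical
  simp only [toP, mem_image, supp, mem_filter, mem_univ, true_and, Prod.mk.injEq]
  constructor
  · rintro ⟨a, ha, rfl, hr⟩
    cases h' : p a with
    | none => rw [h'] at ha; simp at ha
    | some v =>
        rw [h'] at hr; simp only [Option.getD_some] at hr; rw [hr]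
  · intro h
    exact ⟨i, by simp [h], rfl, by simp [h]⟩

lemma toP_injective {m : ℕ} : Function.Injective (toP (m := m)) := by
  intro p q h
  funext i
  cases hp : p i with
  | some r =>
      have h2 : (i, r) ∈ toP q := by rw [← h]; exact mem_toP.2 hp
      rw [mem_toP.1 h2]
  | none =>
      cases hq : q i with
      | none => rfl
      | some r =>
          have h2 : (i, r) ∈ toP p := by rw [h]; exact mem_toP.2 hq
          rw [mem_toP.1 h2] at hp; exact absurd hp (by simp)

lemma card_toP {m : ℕ} (p : Fin m → Option ℕ) : (toP p).card = (supp p).card := by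
  classical
  apply card_image_of_injOn
  intro a _ b _ hab
  exact congrArg Prod.fst hab

lemma isRookPlacement_toP {m : ℕ} {b : Fin m → ℕ} {p : Fin m → Option ℕ}
    (hp : p ∈ optSet b) : IsRookPlacement b (toP p) := by
  obtain ⟨hbd, hinj⟩ := mem_optSet.1 hp
  constructor
  · rintro ⟨i, r⟩ hc
    exact hbd i r (mem_toP.1 hc)
  · rintro ⟨i, r⟩ hc ⟨j, s⟩ hd hne
    have hi := mem_toP.1 hc
    have hj := mem_toP.1 hd
    constructor
    · rintro rfl
      rw [hi] at hj
      obtain rfl : r = s := by simpa using hj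
      exact hne rfl
    · rintro rfl
      exact hne (by rw [hinj i j r hi hj])
  
lemma rookNum_eq {m : ℕ} (b : Fin m → ℕ) (k : ℕ) :
    rookNum b k = ((optSet b).filter fun p => (supp p).card = k).card := by
  classical
  have hset : {P : Finset (Fin m × ℕ) | IsRookPlacement b P ∧ P.card = k}
      = toP '' ↑((optSet b).filter fun p => (supp p).card = k) := by
    ext P
    simp only [Set.mem_setOf_eq, Set.mem_image, Finset.mem_coe, mem_filter]
    constructor
    · rintro ⟨⟨hbd, hdist⟩, hcard⟩
      set p : Fin m → Option ℕ := fun i =>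
        if h : ∃ r, (i, r) ∈ P then some h.choose else none with hpdef
      have key : ∀ i r, p i = some r ↔ (i, r) ∈ P := by
        intro i r
        constructor
        · intro h
          by_cases he : ∃ r', (i, r') ∈ P
          · have h0 : p i = some he.choose := by simp [hpdef, he]
            rw [h0] at h
            obtain rfl : he.choose = r := by simpa using h
            exact he.choose_spec
          · simp [hpdef, he] at h
        · intro h
          have he : ∃ r', (i, r') ∈ P := ⟨r, h⟩
          have hc := he.choose_spec
          have hcr : he.choose = r := by
            by_contra hne
            have := hdist _ hc _ h (by simp [hne])
            exact this.1 rfl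
          simp [hpdef, he, hcr]
      have hPt : toP p = P := by
        ext ⟨i, r⟩
        rw [mem_toP, key]
      have hmem : p ∈ optSet b := by
        rw [mem_optSet]
        constructor
        · intro i r hir
          exact hbd (i, r) ((key i r).1 hir)
        · intro i j r hi hj
          by_contra hne
          have := hdist _ ((key i r).1 hi) _ ((key j r).1 hj)
            (by simp [Prod.ext_iff]; intro h; exact absurd h hne)
          exact this.2 rfl
      refine ⟨p, ⟨hmem, ?_⟩, hPt⟩
      rw [← card_toP, hPt, hcard]
    · rintro ⟨p, ⟨hmem, hcard⟩, rfl⟩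
      exact ⟨isRookPlacement_toP hmem, by rw [card_toP, hcard]⟩
  rw [rookNum, hset, Set.ncard_image_of_injective _ toP_injective,
    Set.ncard_coe_finset]

lemma supp_card_le {m : ℕ} (p : Fin m → Option ℕ) : (supp p).card ≤ m := by
  classical
  exact (card_le_card (subset_univ _)).trans (by simp)

lemma rookNum_eq_zero {m : ℕ} (b : Fin m → ℕ) {k : ℕ} (hk : m < k) :
    rookNum b k = 0 := by
  rw [rookNum_eq]
  rw [Finset.card_eq_zero, Finset.filter_eq_empty_iff]
  intro p _
  exact fun h => absurd (h ▸ supp_card_le p) (by omega)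




open Classical in
def fullSet {m : ℕ} (c : Fin m → ℕ) : Finset (Fin m → ℕ) :=
  (Fintype.piFinset fun i => Finset.range (c i)).filter Function.Injective

lemma mem_fullSet {m : ℕ} {c : Fin m → ℕ} {f : Fin m → ℕ} :
    f ∈ fullSet c ↔ (∀ i, f i < c i) ∧ Function.Injective f := by
  classical
  rw [fullSet, mem_filter, Fintype.mem_piFinset]
  simp

lemma card_fullSet {m : ℕ} {c : Fin m → ℕ} (hc : Monotone c) :
    (fullSet c).card = ∏ i, (c i - (i : ℕ)) := by
  classical
  induction m with
  | zero =>
      rw [Finset.prod_of_isEmpty]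
      rw [Finset.card_eq_one]
      refine ⟨fun i => i.elim0, ?_⟩
      ext f
      simp only [mem_fullSet, mem_singleton]
      constructor
      · intro _; funext i; exact i.elim0
      · rintro rfl
        exact ⟨fun i => i.elim0, fun i => i.elim0⟩
  | succ m ih =>
      have hc' : Monotone (c ∘ Fin.castSucc) := fun i j h =>
        hc (by simp only [Fin.le_def] at h ⊢; simpa using h)
      have hmaps : ∀ f ∈ fullSet c, (f ∘ Fin.castSucc) ∈ fullSet (c ∘ Fin.castSucc) := by
        intro f hf
        obtain ⟨hb, hinj⟩ := mem_fullSet.1 hf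
        exact mem_fullSet.2 ⟨fun i => hb _, hinj.comp (Fin.castSucc_injective m)⟩
      rw [Finset.card_eq_sum_card_fiberwise hmaps]
      have hfib : ∀ f₀ ∈ fullSet (c ∘ Fin.castSucc),
          ((fullSet c).filter fun f => f ∘ Fin.castSucc = f₀).card
            = c (Fin.last m) - m := by
        intro f₀ hf₀
        obtain ⟨hb₀, hinj₀⟩ := mem_fullSet.1 hf₀
        have himsub : (image f₀ univ) ⊆ Finset.range (c (Fin.last m)) := by
          intro v hv
          obtain ⟨i, _, rfl⟩ := mem_image.1 hv
          exact mem_range.2 (lt_of_lt_of_le (hb₀ i) (hc (Fin.le_last _)))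
        have hcard : (Finset.range (c (Fin.last m)) \ image f₀ univ).card
            = c (Fin.last m) - m := by
          rw [Finset.card_sdiff_of_subset himsub, Finset.card_range,
            Finset.card_image_of_injective _ hinj₀, Finset.card_univ, Fintype.card_fin]
        rw [← hcard]
        apply Finset.card_bij (fun f _ => f (Fin.last m))
        · intro f hf
          rw [mem_filter] at hf
          obtain ⟨hmem, hrest⟩ := hf
          obtain ⟨hb, hinj⟩ := mem_fullSet.1 hmem
          rw [mem_sdiff]
          refine ⟨mem_range.2 (hb _), ?_⟩
          intro hcon
          obtain ⟨i, _, hi⟩ := mem_image.1 hcon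
          have : f (Fin.castSucc i) = f (Fin.last m) := by
            rw [← hi, ← hrest]; rfl
          exact absurd (hinj this) (by simp [Fin.ext_iff]; omega)
        · intro f hf g hg hfg
          rw [mem_filter] at hf hg
          funext i
          refine Fin.lastCases ?_ ?_ i
          · exact hfg
          · intro j
            have := congrFun (hf.2.trans hg.2.symm) j
            exact this
        · intro v hv
          rw [mem_sdiff, mem_range] at hv
          refine ⟨Fin.snoc f₀ v, ?_, ?_⟩
          · rw [mem_filter]
            constructor
            · rw [mem_fullSet]
              constructor
              · intro i
                refine Fin.lastCases ?_ ?_ i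
                · simpa using hv.1
                · intro j; simpa using hb₀ j
              · intro i j hij
                rcases Fin.eq_castSucc_or_eq_last i with ⟨i', rfl⟩ | rfl <;>
                  rcases Fin.eq_castSucc_or_eq_last j with ⟨j', rfl⟩ | rfl
                · simp only [Fin.snoc_castSucc] at hij; rw [hinj₀ hij]
                · simp only [Fin.snoc_castSucc, Fin.snoc_last] at hij
                  exact absurd (mem_image_of_mem f₀ (mem_univ i')) (by rw [hij]; exact hv.2)
                · simp only [Fin.snoc_castSucc, Fin.snoc_last] at hij
                  exact absurd (mem_image_of_mem f₀ (mem_univ j')) (by rw [← hij]; exact hv.2)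
                · rfl
            · funext j
              simp [Fin.snoc_castSucc]
          · simp [Fin.snoc_last]
      rw [Finset.sum_congr rfl hfib, Finset.sum_const, smul_eq_mul,
        ih hc', Fin.prod_univ_castSucc]
      simp



lemma card_fullSet_eq_sum {m : ℕ} (b : Fin m → ℕ) (x : ℕ) :
    (fullSet fun i => x + b i).card
      = ∑ k ∈ Finset.range (m + 1), rookNum b k * x.descFactorial (m - k) := by
  classical
  set Θ : (Fin m → ℕ) → (Fin m → Option ℕ) :=
    fun f i => if x ≤ f i then some (f i - x) else none with hΘ
  have hmaps : ∀ f ∈ fullSet fun i => x + b i, Θ f ∈ optSet b := by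
    intro f hf
    obtain ⟨hb, hinj⟩ := mem_fullSet.1 hf
    rw [mem_optSet]
    constructor
    · intro i r hir
      simp only [hΘ] at hir
      split_ifs at hir with h
      · have := hb i
        simp only [Option.some.injEq] at hir
        omega
    · intro i j r hi hj
      simp only [hΘ] at hi hj
      split_ifs at hi hj with h1 h2
      simp only [Option.some.injEq] at hi hj
      exact hinj (by omega)
  rw [Finset.card_eq_sum_card_fiberwise hmaps]
  have hfib : ∀ p ∈ optSet b,
      ((fullSet fun i => x + b i).filter fun f => Θ f = p).card
        = x.descFactorial (m - (supp p).card) := by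
    intro p hp
    obtain ⟨hbd, hinjp⟩ := mem_optSet.1 hp
    have hnone : ∀ i : Fin m, i ∈ (supp p)ᶜ ↔ p i = none := by
      intro i
      simp only [Finset.mem_compl, supp, mem_filter, mem_univ, true_and]
      cases p i <;> simp
    have hnone' : ∀ {i : Fin m}, ¬ (p i).isSome = true → i ∈ (supp p)ᶜ :=
      fun h => (hnone _).2 (Option.not_isSome_iff_eq_none.1 h)
    have hcardemb : Fintype.card ((↥((supp p)ᶜ)) ↪ Fin x)
        = x.descFactorial (m - (supp p).card) := by
      rw [Fintype.card_embedding_eq, Fintype.card_fin, Fintype.card_coe,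
        Finset.card_compl, Fintype.card_fin]
    rw [← hcardemb, ← Fintype.card_coe]
    apply Fintype.card_congr
    refine Equiv.trans ?_ (Equiv.subtypeInjectiveEquivEmbedding _ _)
    refine { toFun := fun fh => ⟨fun i => ⟨fh.1 i.1, ?_⟩, ?_⟩,
             invFun := fun gh => ⟨fun i => if h : (p i).isSome = true
               then x + (p i).get h else (gh.1 ⟨i, hnone' h⟩ : ℕ), ?_⟩,
             left_inv := ?_, right_inv := ?_ }
    · -- bound for toFun
      have hfp : Θ fh.1 = p := (Finset.mem_filter.1 fh.2).2
      have hpi : p i.1 = none := (hnone i.1).1 i.2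
      have hθ : Θ fh.1 i.1 = none := by rw [hfp]; exact hpi
      simp only [hΘ, ite_eq_right_iff] at hθ
      by_contra hcon
      push_neg at hcon
      exact absurd (hθ hcon) (by simp)
    · -- injectivity for toFun
      have hinj : Function.Injective fh.1 :=
        (mem_fullSet.1 (Finset.mem_filter.1 fh.2).1).2
      intro a c hac
      simp only [Fin.mk.injEq] at hac
      exact Subtype.ext (hinj hac)
    · -- invFun lands in fiber
      rw [Finset.mem_filter]
      constructor
      · rw [mem_fullSet]
        constructor
        · intro i
          by_cases h : (p i).isSome = true
          · rw [dif_pos h]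
            have hps : p i = some ((p i).get h) := by simp
            have := hbd i ((p i).get h) hps
            omega
          · rw [dif_neg h]
            have := (gh.1 ⟨i, hnone' h⟩).isLt
            omega
        · intro i j hij
          simp only at hij
          by_cases h1 : (p i).isSome = true <;> by_cases h2 : (p j).isSome = true
          · rw [dif_pos h1, dif_pos h2] at hij
            apply hinjp i j ((p i).get h1)
            · simp
            · have : (p i).get h1 = (p j).get h2 := by omega
              rw [this]; simp
          · rw [dif_pos h1, dif_neg h2] at hij
            exact absurd hij (by have := (gh.1 ⟨j, hnone' h2⟩).isLt; omega)
          · rw [dif_neg h1, dif_pos h2] at hij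
            exact absurd hij (by have := (gh.1 ⟨i, hnone' h1⟩).isLt; omega)
          · rw [dif_neg h1, dif_neg h2] at hij
            have := gh.2 (Fin.val_injective hij)
            simpa using this
      · funext i
        simp only [hΘ]
        by_cases h : (p i).isSome = true
        · rw [dif_pos h]
          rw [if_pos (by omega)]
          simp
        · rw [dif_neg h]
          rw [if_neg (by have := (gh.1 ⟨i, hnone' h⟩).isLt; omega)]
          exact (Option.not_isSome_iff_eq_none.1 h).symm
    · -- left inverse
      rintro fh
      apply Subtype.ext
      funext i
      dsimp only
      have hfp : Θ fh.1 = p := (Finset.mem_filter.1 fh.2).2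
      by_cases h : (p i).isSome = true
      · rw [dif_pos h]
        have hi := congrFun hfp i
        simp only [hΘ] at hi
        by_cases hx : x ≤ fh.1 i
        · rw [if_pos hx] at hi
          have hs : p i = some ((p i).get h) := by simp
          have h2 := Option.some.inj (hi.trans hs)
          omega
        · rw [if_neg hx] at hi
          rw [← hi] at h
          simp at h
      · rw [dif_neg h]
    · -- right inverse
      rintro gh
      apply Subtype.ext
      funext i
      apply Fin.val_injective
      dsimp only
      have h : ¬ (p i.1).isSome = true := by
        rw [(hnone i.1).1 i.2]; simp
      rw [dif_neg h]
  rw [Finset.sum_congr rfl hfib]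
  have hm : ∀ p ∈ optSet b, (supp p).card ∈ Finset.range (m + 1) := by
    intro p _
    rw [Finset.mem_range]
    exact Nat.lt_succ_of_le (supp_card_le p)
  rw [← Finset.sum_fiberwise_of_maps_to hm fun p => x.descFactorial (m - (supp p).card)]
  apply Finset.sum_congr rfl
  intro k _
  rw [rookNum_eq]
  rw [Finset.sum_congr rfl (fun p hp => by
    rw [(Finset.mem_filter.1 hp).2] :
      ∀ p ∈ (optSet b).filter fun p => (supp p).card = k, _ = x.descFactorial (m - k)),
    Finset.sum_const, smul_eq_mul]


/-- inversion: equal weighted descFactorial sums force equal coefficients -/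
lemma desc_inversion {m : ℕ} (a a' : ℕ → ℕ)
    (h : ∀ x : ℕ, ∑ k ∈ Finset.range (m + 1), a k * x.descFactorial (m - k)
      = ∑ k ∈ Finset.range (m + 1), a' k * x.descFactorial (m - k)) :
    ∀ k, k ≤ m → a k = a' k := by
  classical
  have claim : ∀ d, ∀ k, k ≤ m → m - k = d → a k = a' k := by
    intro d
    induction d using Nat.strong_induction_on with
    | _ d ih =>
      intro k hk hd
      have hx := h d
      have hterm : ∀ k' ∈ (Finset.range (m + 1)).erase k,
          a k' * d.descFactorial (m - k') = a' k' * d.descFactorial (m - k') := by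
        intro k' hk'
        obtain ⟨hne, hr⟩ := Finset.mem_erase.1 hk'
        rw [Finset.mem_range] at hr
        rcases lt_or_ge d (m - k') with hlt | hle
        · rw [Nat.descFactorial_eq_zero_iff_lt.2 hlt, Nat.mul_zero, Nat.mul_zero]
        · have hlt2 : m - k' < d := by omega
          rw [ih _ hlt2 k' (by omega) rfl]
      have hkmem : k ∈ Finset.range (m + 1) := Finset.mem_range.2 (by omega)
      rw [← Finset.add_sum_erase _ _ hkmem, ← Finset.add_sum_erase _ _ hkmem,
        Finset.sum_congr rfl hterm] at hx
      have := Nat.add_right_cancel hx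
      rw [hd] at this
      exact Nat.eq_of_mul_eq_mul_right (Nat.descFactorial_self d ▸ d.factorial_pos) this
  intro k hk
  exact claim (m - k) k hk rfl

section Boards

variable {n : ℕ}

/-- the board with `b i = i` except `b j = j - 1` -/
def Hb (j : Fin (n + 1)) : Fin (n + 1) → ℕ := fun i => if i = j then (j : ℕ) - 1 else (i : ℕ)

lemma Hb_monotone {j : Fin (n + 1)} : Monotone (Hb j) := by
  intro i i' h
  rw [Fin.le_def] at h
  unfold Hb
  have hij : i = j ↔ (i : ℕ) = (j : ℕ) := Fin.ext_iff
  have hij' : i' = j ↔ (i' : ℕ) = (j : ℕ) := Fin.ext_iff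
  split_ifs with h1 h2 h2 <;>
    [skip; skip; skip; omega] <;> rw [hij] at * <;> omega

lemma prod_Hb (hn : 0 < n) (j : Fin (n + 1)) (hj : 1 ≤ (j : ℕ)) (x : ℕ) :
    (∏ i : Fin (n + 1), (x + Hb j i - (i : ℕ))) = x ^ n * (x - 1) := by
  classical
  rw [← Finset.mul_prod_erase _ _ (Finset.mem_univ j)]
  have h1 : x + Hb j j - (j : ℕ) = x - 1 := by
    unfold Hb; rw [if_pos rfl]; omega
  have h2 : ∀ i ∈ Finset.univ.erase j, x + Hb j i - (i : ℕ) = x := by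
    intro i hi
    have hne : i ≠ j := (Finset.mem_erase.1 hi).1
    unfold Hb; rw [if_neg hne]; omega
  rw [h1, Finset.prod_congr rfl h2, Finset.prod_const]
  rw [Finset.card_erase_of_mem (Finset.mem_univ j), Finset.card_univ, Fintype.card_fin]
  have he : n + 1 - 1 = n := by omega
  rw [he, Nat.mul_comm]

end Boards

section Classify
variable {n : ℕ}
open Polynomial

lemma classify (hn : 0 < n) (b : Fin (n + 1) → ℕ)
    (hprod : ∀ x : ℕ, (∏ i : Fin (n + 1), (x + b i - (i : ℕ))) = x ^ n * (x - 1)) :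
    ∃ j : Fin (n + 1), 1 ≤ (j : ℕ) ∧ b = Hb j := by
  classical
  set M₁ : Multiset ℤ :=
    Finset.univ.val.map (fun i : Fin (n + 1) => ((i : ℕ) : ℤ) - (b i : ℤ)) with hM₁
  set M₂ : Multiset ℤ := Multiset.replicate n (0 : ℤ) + {1} with hM₂
  set p : Polynomial ℤ := (M₁.map fun r => X - C r).prod with hp
  set q : Polynomial ℤ := (M₂.map fun r => X - C r).prod with hq
  have heval : ∀ x : ℤ, (n : ℤ) < x → p.eval x = q.eval x := by
    intro x hx
    have hx0 : 0 ≤ x := by omega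
    obtain ⟨x', rfl⟩ : ∃ x' : ℕ, x = (x' : ℤ) := ⟨x.toNat, (Int.toNat_of_nonneg hx0).symm⟩
    have hx' : n < x' := by exact_mod_cast hx
    have hevp : p.eval (x' : ℤ) = ∏ i : Fin (n + 1), ((x' : ℤ) + (b i : ℤ) - ((i : ℕ) : ℤ)) := by
      rw [hp, Polynomial.eval_multiset_prod, hM₁, Multiset.map_map, Multiset.map_map,
        ← Finset.prod_eq_multiset_prod]
      apply Finset.prod_congr rfl
      intro i _
      simp only [Function.comp_apply, Polynomial.eval_sub, Polynomial.eval_X,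
        Polynomial.eval_C]
      ring
    have hevq : q.eval (x' : ℤ) = (x' : ℤ) ^ n * ((x' : ℤ) - 1) := by
      rw [hq, hM₂]
      rw [Multiset.map_add, Multiset.prod_add, Multiset.map_replicate,
        Multiset.prod_replicate, Multiset.map_singleton, Multiset.prod_singleton]
      simp
    rw [hevp, hevq]
    have hcast : ∀ i : Fin (n + 1), ((x' + b i - (i : ℕ) : ℕ) : ℤ)
        = (x' : ℤ) + (b i : ℤ) - ((i : ℕ) : ℤ) := by
      intro i
      have : (i : ℕ) ≤ x' + b i := by have := i.isLt; omega
      omega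
    calc ∏ i : Fin (n + 1), ((x' : ℤ) + (b i : ℤ) - ((i : ℕ) : ℤ))
        = ∏ i : Fin (n + 1), ((x' + b i - (i : ℕ) : ℕ) : ℤ) := by
          exact Finset.prod_congr rfl fun i _ => (hcast i).symm
      _ = ((∏ i : Fin (n + 1), (x' + b i - (i : ℕ)) : ℕ) : ℤ) := by
          rw [Nat.cast_prod]
      _ = ((x' ^ n * (x' - 1) : ℕ) : ℤ) := by rw [hprod x']
      _ = (x' : ℤ) ^ n * ((x' : ℤ) - 1) := by
          have h1 : 1 ≤ x' := by omega
          push_cast [h1]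
          ring
  have hpq : p = q := by
    apply Polynomial.eq_of_infinite_eval_eq
    apply Set.Infinite.mono (s := Set.Ioi (n : ℤ))
    · exact fun x hx => heval x hx
    · exact Set.Ioi_infinite _
  have hMeq : M₁ = M₂ := by
    rw [← Polynomial.roots_multiset_prod_X_sub_C M₁, ← Polynomial.roots_multiset_prod_X_sub_C M₂,
      ← hp, ← hq, hpq]
  have hmemvals : ∀ i : Fin (n + 1), ((i : ℕ) : ℤ) - (b i : ℤ) = 0 ∨ ((i : ℕ) : ℤ) - (b i : ℤ) = 1 := by
    intro i
    have hmem : ((i : ℕ) : ℤ) - (b i : ℤ) ∈ M₁ := by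
      rw [hM₁]
      exact Multiset.mem_map_of_mem _ (by simp)
    rw [hMeq, hM₂, Multiset.mem_add] at hmem
    rcases hmem with h | h
    · exact Or.inl (Multiset.eq_of_mem_replicate h)
    · exact Or.inr (by simpa using h)
  have hcnt : Multiset.count (1 : ℤ) M₁ = 1 := by
    rw [hMeq, hM₂]
    rw [Multiset.count_add, Multiset.count_replicate]
    simp
  have hc1 : (Finset.univ.filter (fun i : Fin (n + 1) =>
      (1 : ℤ) = ((i : ℕ) : ℤ) - (b i : ℤ))).card = 1 := by
    rw [hM₁, Multiset.count_map] at hcnt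
    rw [Finset.card_def, Finset.filter_val]
    exact hcnt
  obtain ⟨j, hj⟩ := Finset.card_eq_one.1 hc1
  have hjval : (1 : ℤ) = ((j : ℕ) : ℤ) - (b j : ℤ) := by
    have : j ∈ Finset.univ.filter (fun i : Fin (n + 1) =>
        (1 : ℤ) = ((i : ℕ) : ℤ) - (b i : ℤ)) := by rw [hj]; exact Finset.mem_singleton_self j
    exact (Finset.mem_filter.1 this).2
  have hother : ∀ i : Fin (n + 1), i ≠ j → b i = (i : ℕ) := by
    intro i hne
    have hni : ¬ ((1 : ℤ) = ((i : ℕ) : ℤ) - (b i : ℤ)) := by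
      intro hcon
      have : i ∈ Finset.univ.filter (fun i : Fin (n + 1) =>
          (1 : ℤ) = ((i : ℕ) : ℤ) - (b i : ℤ)) := Finset.mem_filter.2 ⟨Finset.mem_univ i, hcon⟩
      rw [hj, Finset.mem_singleton] at this
      exact hne this
    rcases hmemvals i with h | h
    · omega
    · exact absurd h.symm hni
  refine ⟨j, by omega, ?_⟩
  funext i
  unfold Hb
  by_cases h : i = j
  · subst h; rw [if_pos rfl]; omega
  · rw [if_neg h]; exact hother i h

end Classify

lemma rookEquiv_of_fullCard {m : ℕ} {b₁ b₂ : Fin m → ℕ}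
    (h : ∀ x : ℕ, (fullSet fun i => x + b₁ i).card = (fullSet fun i => x + b₂ i).card) :
    ∀ k, rookNum b₁ k = rookNum b₂ k := by
  intro k
  rcases le_or_gt k m with hk | hk
  · exact desc_inversion (rookNum b₁) (rookNum b₂)
      (fun x => by rw [← card_fullSet_eq_sum, ← card_fullSet_eq_sum, h]) k hk
  · rw [rookNum_eq_zero _ hk, rookNum_eq_zero _ hk]

lemma fullCard_Hb {n : ℕ} (hn : 0 < n) (j : Fin (n + 1)) (hj : 1 ≤ (j : ℕ)) (x : ℕ) :
    (fullSet fun i => x + Hb j i).card = x ^ n * (x - 1) := by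
  have hmono : Monotone (fun i => x + Hb j i) :=
    fun a c h => Nat.add_le_add_left (Hb_monotone h) x
  rw [card_fullSet hmono]
  exact prod_Hb hn j hj x

end RookAux

/-- for `n > 0`, the complete graph `K_n` is isomorphic to the rook
equivalence graph of the Ferrers board `(0, 1, …, n-1, n-1)` with `n + 1` columns
(0-indexed column heights `b i = min i (n - 1)`). -/

theorem stmt5 (n : ℕ) (hn : 0 < n) (B : FerrersBoard (n + 1))
    (hB : B.1 = fun i : Fin (n + 1) => min (i : ℕ) (n - 1)) :
    Nonempty ((⊤ : SimpleGraph (Fin n)) ≃g rookEquivGraph B) := by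
  classical
  have hBH : B.1 = Hb (Fin.last n) := by
    rw [hB]; funext i
    unfold Hb
    by_cases h : i = Fin.last n
    · subst h
      rw [if_pos rfl, Fin.val_last]
      omega
    · rw [if_neg h]
      have hlt : (i : ℕ) < n := by
        have h2 := i.isLt
        have h3 : (i : ℕ) ≠ n := fun hc => h (Fin.ext (by rw [hc, Fin.val_last]))
        omega
      omega
  have hlast1 : 1 ≤ ((Fin.last n : Fin (n + 1)) : ℕ) := by rw [Fin.val_last]; omega
  have hre : ∀ j : Fin (n + 1), 1 ≤ (j : ℕ) → RookEquiv (Hb j) B.1 := by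
    intro j hj
    rw [hBH]
    exact rookEquiv_of_fullCard
      (fun x => by rw [fullCard_Hb hn j hj, fullCard_Hb hn _ hlast1])
  set vmap : Fin n → {C : FerrersBoard (n + 1) // RookEquiv C.1 B.1} :=
    fun t => ⟨⟨Hb t.succ, Hb_monotone⟩, hre t.succ (by rw [Fin.val_succ]; omega)⟩ with hvmap
  have hHbne : ∀ a c : Fin (n + 1), 1 ≤ (a : ℕ) → a ≠ c → Hb a ≠ Hb c := by
    intro a c ha hac hcon
    have h2 := congrFun hcon a
    unfold Hb at h2
    rw [if_pos rfl, if_neg hac] at h2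
    omega
  have hinj : Function.Injective vmap := by
    intro t t' h
    have h2 : Hb t.succ = Hb t'.succ := congrArg (fun v => v.1.1) h
    by_contra hne
    exact hHbne t.succ t'.succ (by rw [Fin.val_succ]; omega)
      (fun hc => hne (Fin.succ_inj.1 hc)) h2
  have hsurj : Function.Surjective vmap := by
    rintro ⟨⟨b, hmono⟩, hrb⟩
    have hfc : ∀ x : ℕ, (∏ i : Fin (n + 1), (x + b i - (i : ℕ))) = x ^ n * (x - 1) := by
      intro x
      have hmx : Monotone (fun i => x + b i) := fun a c h => Nat.add_le_add_left (hmono h) x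
      rw [← card_fullSet hmx]
      calc (fullSet fun i => x + b i).card
          = ∑ k ∈ Finset.range (n + 1 + 1), rookNum b k * x.descFactorial (n + 1 - k) :=
            card_fullSet_eq_sum b x
        _ = ∑ k ∈ Finset.range (n + 1 + 1), rookNum B.1 k * x.descFactorial (n + 1 - k) :=
            Finset.sum_congr rfl fun k _ => by rw [hrb k]
        _ = (fullSet fun i => x + B.1 i).card := (card_fullSet_eq_sum B.1 x).symm
        _ = x ^ n * (x - 1) := by rw [hBH]; exact fullCard_Hb hn _ hlast1 x
    obtain ⟨j, hj1, hbj⟩ := classify hn b hfc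
    refine ⟨⟨(j : ℕ) - 1, by have := j.isLt; omega⟩, ?_⟩
    apply Subtype.ext
    apply Subtype.ext
    show Hb (Fin.succ _) = b
    have hsj : Fin.succ (⟨(j : ℕ) - 1, by have := j.isLt; omega⟩ : Fin n) = j := by
      apply Fin.ext
      rw [Fin.val_succ]
      show (j : ℕ) - 1 + 1 = (j : ℕ)
      omega
    rw [hsj, hbj]
  have hmoves : ∀ a c : Fin (n + 1), 1 ≤ (a : ℕ) → 1 ≤ (c : ℕ) → a ≠ c →
      MovesSquares (Hb a) (Hb c) := by
    intro a c ha hc hac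
    refine ⟨c, a, 1, fun h => hac h.symm, Nat.one_pos, ?_, ?_, ?_⟩
    · unfold Hb
      rw [if_neg (fun h => hac h.symm), if_pos rfl]
      omega
    · unfold Hb
      rw [if_neg hac, if_pos rfl]
      omega
    · intro l hl1 hl2
      unfold Hb
      rw [if_neg hl2, if_neg hl1]
  refine ⟨⟨Equiv.ofBijective vmap ⟨hinj, hsurj⟩, @fun s t => ?_⟩⟩
  rw [SimpleGraph.top_adj]
  show (SimpleGraph.fromRel _).Adj (vmap s) (vmap t) ↔ s ≠ t
  rw [SimpleGraph.fromRel_adj]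
  constructor
  · rintro ⟨hne, -⟩ rfl
    exact hne rfl
  · intro hst
    refine ⟨fun hc => hst (hinj hc), Or.inl ?_⟩
    exact hmoves s.succ t.succ (by rw [Fin.val_succ]; omega) (by rw [Fin.val_succ]; omega)
      (fun hc => hst (Fin.succ_inj.1 hc))
end

section
/- Fix a positive integer m. Let B_1 and B_2 be m-level rook equivalent singleton boards, both with n columns, that are adjacent in the m-level rook equivalence graph (i.e., {B_1,B_2} is an edge). Then the m-level root vectors ξ_m(B_1) and ξ_m(B_2) agree in all positions except two positions i_1 < i_2, in which the two (distinct) entries are swapped: if ξ_m(B_1) = ⟨z_1,…,z_{i_1},…,z_{i_2},…,z_n⟩ then ξ_m(B_2) = ⟨z_1,…,z_{i_2},…,z_{i_1},…,z_n⟩ with z_{i_1} ≠ z_{i_2}. -/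
/-- An `m`-level rook placement on the board with column heights `b`:
a set of cells (column, row) inside the board, no two sharing a column or a level.
Cells are 0-indexed: cell `(i, j)` lies in the board iff `j < b i`, and the level
of row `j` is `j / m`. -/
def IsMLevelPlacement {n : ℕ} (m : ℕ) (b : Fin n → ℕ) (P : Finset (Fin n × ℕ)) : Prop :=
  (∀ c ∈ P, c.2 < b c.1) ∧
  ∀ c ∈ P, ∀ d ∈ P, c ≠ d → c.1 ≠ d.1 ∧ c.2 / m ≠ d.2 / m

/-- The `k`-th `m`-level rook number of the board `b`. -/
noncomputable def mRookNum {n : ℕ} (m : ℕ) (b : Fin n → ℕ) (k : ℕ) : ℕ :=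
  Set.ncard {P : Finset (Fin n × ℕ) | IsMLevelPlacement m b P ∧ P.card = k}

/-- Two boards are `m`-level rook equivalent if all their `m`-level rook numbers agree. -/
def MRookEquiv {n₁ n₂ : ℕ} (m : ℕ) (b₁ : Fin n₁ → ℕ) (b₂ : Fin n₂ → ℕ) : Prop :=
  ∀ k, mRookNum m b₁ k = mRookNum m b₂ k

/-- The `m`-floor of a natural number: the largest multiple of `m` that is `≤ o`. -/
def mFloor (m o : ℕ) : ℕ := m * (o / m)

/-- The `m`-floor of an integer: the largest multiple of `m` that is `≤ o`. -/
def mFloorZ (m : ℕ) (o : ℤ) : ℤ := o - o % (m : ℤ)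

/-- A singleton board: a Ferrers board (weakly increasing column heights) such that
whenever a column height `b i` is not a multiple of `m`, the `m`-floor of the next
column height is strictly larger. -/
def IsSingletonBoard {n : ℕ} (m : ℕ) (b : Fin n → ℕ) : Prop :=
  Monotone b ∧ ∀ i j : Fin n, (j : ℕ) = (i : ℕ) + 1 → ¬ (m ∣ b i) →
    mFloor m (b i) < mFloor m (b j)

/-- The `m`-level root vector of a board: the (0-indexed) `i`-th entry is
`m * i - b i` (1-indexed: `m(i-1) - b_i`). -/
def mRootVec {n : ℕ} (m : ℕ) (b : Fin n → ℕ) : Fin n → ℤ :=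
  fun i => (m : ℤ) * (i : ℤ) - (b i : ℤ)

/-- A singleton board with `n` columns (for the fixed level size `m`). -/
def SingletonBoard (m n : ℕ) : Type := {b : Fin n → ℕ // IsSingletonBoard m b}

/-- The `m`-level rook equivalence graph of the equivalence class of `B`: vertices
are the singleton boards with `n` columns `m`-level rook equivalent to `B`; two
distinct boards are adjacent when one is obtained from the other by moving squares
out of one column into a single other column. -/
def mRookEquivGraph {n : ℕ} (m : ℕ) (B : SingletonBoard m n) :
    SimpleGraph {C : SingletonBoard m n // MRookEquiv m C.1 B.1} :=
  SimpleGraph.fromRel fun C D => MovesSquares C.1.1 D.1.1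

/-- `mEntryCount m b k` is `v_k`, the number of entries of the `m`-level root
vector of `b` equal to `k`. -/
def mEntryCount {n : ℕ} (m : ℕ) (b : Fin n → ℕ) (k : ℕ) : ℕ :=
  (Finset.univ.filter fun l => mRootVec m b l = (k : ℤ)).card


section Stmt8Aux

/-- Key consequence of the singleton condition: if `i < j` and `a` is a row of a cell
in column `i`, then the whole level of `a` lies inside column `j`. -/
lemma key_level {n m : ℕ} (hm : 0 < m) {b : Fin n → ℕ} (hb : IsSingletonBoard m b)
    {i j : Fin n} (hij : i < j) {a : ℕ} (ha : a < b i) :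
    m * (a / m) + m ≤ b j := by
  obtain ⟨hmono, hsing⟩ := hb
  by_cases h : m ∣ b i
  · obtain ⟨t, ht⟩ := h
    have h1 : a / m < t := by
      rw [Nat.div_lt_iff_lt_mul hm]
      calc a < b i := ha
        _ = m * t := ht
        _ = t * m := Nat.mul_comm _ _
    calc m * (a / m) + m = m * (a / m + 1) := by ring
      _ ≤ m * t := Nat.mul_le_mul_left m h1
      _ = b i := ht.symm
      _ ≤ b j := hmono hij.le
  · have hin : (i : ℕ) + 1 < n := by
      have hj := j.isLt
      have : (i : ℕ) < (j : ℕ) := hij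
      omega
    set i' : Fin n := ⟨(i : ℕ) + 1, hin⟩ with hi'
    have hfl := hsing i i' rfl h
    unfold mFloor at hfl
    have h1 : b i / m + 1 ≤ b i' / m := by
      have := Nat.lt_of_mul_lt_mul_left hfl
      omega
    have h2 : a / m ≤ b i / m := Nat.div_le_div_right ha.le
    have h3 : m * (b i' / m) ≤ b i' := Nat.mul_div_le _ _
    have h4 : b i' ≤ b j := by
      apply hmono
      have : (i' : ℕ) ≤ (j : ℕ) := by
        have : (i : ℕ) < (j : ℕ) := hij
        simp [hi']
        omega
      exact this
    calc m * (a / m) + m ≤ m * (b i / m) + m := by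
          have := Nat.mul_le_mul_left m h2; omega
      _ = m * (b i / m + 1) := by ring
      _ ≤ m * (b i' / m) := Nat.mul_le_mul_left m h1
      _ ≤ b i' := h3
      _ ≤ b j := h4

/-- Counting rows below `B` avoiding the level of `a`. -/
lemma count_level {m : ℕ} (hm : 0 < m) {a B : ℕ} (h : m * (a / m) + m ≤ B) :
    ((Finset.range B).filter fun r => ¬ (r / m = a / m)).card = B - m := by
  have hpos : ((Finset.range B).filter fun r => (r / m = a / m)).card = m := by
    have : ((Finset.range B).filter fun r => (r / m = a / m)) =
        Finset.Ico (m * (a / m)) (m * (a / m) + m) := by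
      ext r
      simp only [Finset.mem_filter, Finset.mem_range, Finset.mem_Ico]
      constructor
      · rintro ⟨hr, hdiv⟩
        have h1 := Nat.div_add_mod r m
        rw [hdiv] at h1
        have h2 := Nat.mod_lt r hm
        omega
      · rintro ⟨h1, h2⟩
        have hle : a / m ≤ r / m := by
          rw [Nat.le_div_iff_mul_le hm]
          have hcomm : a / m * m = m * (a / m) := Nat.mul_comm _ _
          omega
        have hlt : r / m < a / m + 1 := by
          rw [Nat.div_lt_iff_lt_mul hm]
          calc r < m * (a / m) + m := h2
            _ = (a / m + 1) * m := by ring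
        omega
    rw [this, Nat.card_Ico]
    omega
  have := Finset.card_filter_add_card_filter_not
    (s := Finset.range B) (p := fun r => (r / m = a / m))
  rw [Finset.card_range] at this
  omega

/-- The finset of cells of the board `b`. -/
def cellsB {n : ℕ} (b : Fin n → ℕ) : Finset (Fin n × ℕ) :=
  Finset.univ.biUnion fun i => (Finset.range (b i)).image fun j => (i, j)

lemma mem_cellsB {n : ℕ} {b : Fin n → ℕ} {c : Fin n × ℕ} :
    c ∈ cellsB b ↔ c.2 < b c.1 := by
  obtain ⟨i, j⟩ := c
  simp [cellsB, Prod.ext_iff]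

/-- Ordered pairs of cells forming a 2-rook `m`-level placement, ordered by column. -/
def pairs2 {n : ℕ} (m : ℕ) (b : Fin n → ℕ) : Finset ((Fin n × ℕ) × (Fin n × ℕ)) :=
  ((cellsB b) ×ˢ (cellsB b)).filter fun cd => cd.1.1 < cd.2.1 ∧ cd.1.2 / m ≠ cd.2.2 / m

lemma rook2_eq_card_pairs2 {n m : ℕ} (b : Fin n → ℕ) :
    mRookNum m b 2 = (pairs2 m b).card := by
  have hset : {P : Finset (Fin n × ℕ) | IsMLevelPlacement m b P ∧ P.card = 2} =
      (fun cd : (Fin n × ℕ) × (Fin n × ℕ) => ({cd.1, cd.2} : Finset (Fin n × ℕ))) ''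
        ↑(pairs2 m b) := by
    ext P
    simp only [Set.mem_setOf_eq, Set.mem_image, Finset.mem_coe]
    constructor
    · rintro ⟨⟨hin, hpair⟩, hcard⟩
      obtain ⟨c, d, hcd, rfl⟩ := Finset.card_eq_two.mp hcard
      have hc : c ∈ ({c, d} : Finset (Fin n × ℕ)) := by simp
      have hd : d ∈ ({c, d} : Finset (Fin n × ℕ)) := by simp
      have hcc := hin c hc
      have hdd := hin d hd
      obtain ⟨hne1, hne2⟩ := hpair c hc d hd hcd
      rcases lt_trichotomy c.1 d.1 with hlt | heq | hgt
      · exact ⟨(c, d), Finset.mem_filter.mpr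
          ⟨Finset.mem_product.mpr ⟨mem_cellsB.mpr hcc, mem_cellsB.mpr hdd⟩, hlt, hne2⟩, rfl⟩
      · exact absurd heq hne1
      · refine ⟨(d, c), Finset.mem_filter.mpr
          ⟨Finset.mem_product.mpr ⟨mem_cellsB.mpr hdd, mem_cellsB.mpr hcc⟩, hgt, hne2.symm⟩, ?_⟩
        simp [Finset.pair_comm]
    · rintro ⟨⟨c, d⟩, hmem, rfl⟩
      rw [pairs2, Finset.mem_filter, Finset.mem_product] at hmem
      obtain ⟨⟨hc, hd⟩, hlt, hlvl⟩ := hmem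
      have hcd : c ≠ d := by
        intro h; rw [h] at hlt; exact lt_irrefl _ hlt
      refine ⟨⟨?_, ?_⟩, Finset.card_pair hcd⟩
      · intro e he
        rcases Finset.mem_insert.mp he with rfl | he'
        · exact mem_cellsB.mp hc
        · rw [Finset.mem_singleton.mp he']; exact mem_cellsB.mp hd
      · intro e he f hf hef
        rcases Finset.mem_insert.mp he with rfl | he' <;>
          rcases Finset.mem_insert.mp hf with rfl | hf'
        · exact absurd rfl hef
        · rw [Finset.mem_singleton.mp hf']
          exact ⟨ne_of_lt hlt, hlvl⟩
        · rw [Finset.mem_singleton.mp he']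
          exact ⟨(ne_of_lt hlt).symm, hlvl.symm⟩
        · rw [Finset.mem_singleton.mp he', Finset.mem_singleton.mp hf'] at hef
          exact absurd rfl hef
  rw [mRookNum, hset, Set.ncard_image_of_injOn, Set.ncard_coe_finset]
  intro x hx y hy hxy
  rw [Finset.mem_coe, pairs2, Finset.mem_filter] at hx hy
  obtain ⟨-, hx1, -⟩ := hx
  obtain ⟨-, hy1, -⟩ := hy
  have h : ({x.1, x.2} : Set (Fin n × ℕ)) = {y.1, y.2} := by
    have := congrArg (fun s : Finset (Fin n × ℕ) => (s : Set (Fin n × ℕ))) hxy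
    simpa using this
  rcases Set.pair_eq_pair_iff.mp h with ⟨e1, e2⟩ | ⟨e1, e2⟩
  · exact Prod.ext e1 e2
  · exfalso
    rw [e1, e2] at hx1
    exact lt_asymm hx1 hy1

lemma card_pairs2 {n m : ℕ} (hm : 0 < m) {b : Fin n → ℕ} (hb : IsSingletonBoard m b) :
    (pairs2 m b).card = ∑ i : Fin n, b i * ∑ j ∈ Finset.Ioi i, (b j - m) := by
  classical
  have h1 : (pairs2 m b).card =
      ∑ c ∈ cellsB b, ((pairs2 m b).filter fun cd => cd.1 = c).card := by
    apply Finset.card_eq_sum_card_fiberwise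
    intro cd hcd
    rw [Finset.mem_coe, pairs2, Finset.mem_filter, Finset.mem_product] at hcd
    exact hcd.1.1
  have h2 : ∀ c ∈ cellsB b, ((pairs2 m b).filter fun cd => cd.1 = c).card =
      ∑ j ∈ Finset.Ioi c.1, (b j - m) := by
    intro c hc
    have hcell : c.2 < b c.1 := mem_cellsB.mp hc
    have hfib : ((pairs2 m b).filter fun cd => cd.1 = c).card =
        ∑ j ∈ Finset.Ioi c.1,
          (((pairs2 m b).filter fun cd => cd.1 = c).filter fun cd => cd.2.1 = j).card := by
      apply Finset.card_eq_sum_card_fiberwise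
      intro cd hcd
      rw [Finset.mem_coe, Finset.mem_filter, pairs2, Finset.mem_filter] at hcd
      obtain ⟨⟨-, hlt, -⟩, hc1⟩ := hcd
      rw [Finset.mem_coe, Finset.mem_Ioi, ← hc1]
      exact hlt
    rw [hfib]
    apply Finset.sum_congr rfl
    intro j hj
    rw [Finset.mem_Ioi] at hj
    rw [← count_level hm (key_level hm hb hj hcell)]
    refine Finset.card_bij' (fun cd _ => cd.2.2) (fun r _ => (c, (j, r))) ?_ ?_ ?_ ?_
    · intro cd hcd
      simp only [Finset.mem_filter, pairs2, Finset.mem_product] at hcd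
      obtain ⟨⟨⟨⟨-, hc2⟩, -, hlvl⟩, hcc⟩, hj2⟩ := hcd
      simp only [Finset.mem_filter, Finset.mem_range]
      constructor
      · rw [← hj2]; exact mem_cellsB.mp hc2
      · rw [← hcc]; intro h; exact hlvl h.symm
    · intro r hr
      rw [Finset.mem_filter, Finset.mem_range] at hr
      refine Finset.mem_filter.mpr ⟨Finset.mem_filter.mpr ⟨?_, rfl⟩, rfl⟩
      rw [pairs2, Finset.mem_filter, Finset.mem_product]
      exact ⟨⟨hc, mem_cellsB.mpr hr.1⟩, hj, fun h => hr.2 h.symm⟩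
    · intro cd hcd
      simp only [Finset.mem_filter] at hcd
      obtain ⟨⟨-, hcc⟩, hj2⟩ := hcd
      exact Prod.ext hcc.symm (Prod.ext hj2.symm rfl)
    · intro r hr
      rfl
  rw [h1, Finset.sum_congr rfl h2]
  have hdisj : Set.PairwiseDisjoint (↑(Finset.univ : Finset (Fin n)))
      (fun i : Fin n => (Finset.range (b i)).image fun j => (i, j)) := by
    intro x _ y _ hxy
    apply Finset.disjoint_left.mpr
    intro c hc1 hc2
    simp only [Finset.mem_image, Finset.mem_range] at hc1 hc2
    obtain ⟨a1, -, rfl⟩ := hc1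
    obtain ⟨a2, -, h⟩ := hc2
    exact hxy (congrArg Prod.fst h).symm
  rw [cellsB, Finset.sum_biUnion hdisj]
  apply Finset.sum_congr rfl
  intro i _
  rw [Finset.sum_image (fun x _ y _ h => by
    have := congrArg Prod.snd h
    simpa using this)]
  simp only []
  rw [Finset.sum_const, Finset.card_range, smul_eq_mul]

/-- The second `m`-level rook number of a singleton board, as an integer. -/
lemma rook2_int {n m : ℕ} (hm : 0 < m) {b : Fin n → ℕ} (hb : IsSingletonBoard m b) :
    ((mRookNum m b 2 : ℕ) : ℤ) =
      ∑ i : Fin n, ∑ j ∈ Finset.Ioi i, (b i : ℤ) * ((b j : ℤ) - (m : ℤ)) := by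
  rw [rook2_eq_card_pairs2, card_pairs2 hm hb, Nat.cast_sum]
  apply Finset.sum_congr rfl
  intro i _
  by_cases h0 : b i = 0
  · simp [h0]
  · have hj : ∀ j ∈ Finset.Ioi i, m ≤ b j := by
      intro j hj
      have := key_level hm hb (Finset.mem_Ioi.mp hj) (Nat.pos_of_ne_zero h0)
      omega
    rw [Nat.cast_mul, Nat.cast_sum, Finset.mul_sum]
    apply Finset.sum_congr rfl
    intro j hjm
    rw [Nat.cast_sub (hj j hjm)]

lemma sum_split_point {n : ℕ} (i : Fin n) (ψ : Fin n → ℤ) :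
    ∑ j, ψ j = (∑ j ∈ Finset.Iio i, ψ j) + ψ i + ∑ j ∈ Finset.Ioi i, ψ j := by
  have hdisj : Disjoint (Finset.Iio i) (insert i (Finset.Ioi i)) := by
    rw [Finset.disjoint_left]
    intro a ha hb
    rw [Finset.mem_Iio] at ha
    rcases Finset.mem_insert.mp hb with rfl | hb'
    · exact lt_irrefl _ ha
    · exact lt_asymm ha (Finset.mem_Ioi.mp hb')
  have huniv : (Finset.univ : Finset (Fin n)) = Finset.Iio i ∪ insert i (Finset.Ioi i) := by
    ext j
    simp only [Finset.mem_univ, true_iff, Finset.mem_union, Finset.mem_Iio, Finset.mem_insert,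
      Finset.mem_Ioi]
    rcases lt_trichotomy j i with h | h | h
    · exact Or.inl h
    · exact Or.inr (Or.inl h)
    · exact Or.inr (Or.inr h)
  rw [huniv, Finset.sum_union hdisj, Finset.sum_insert (by simp)]
  ring

lemma double_T1 {n : ℕ} (h : Fin n → ℤ) :
    (∑ i, h i) ^ 2 = (∑ i, h i * h i) + 2 * ∑ i, ∑ j ∈ Finset.Ioi i, h i * h j := by
  have expand : (∑ i, h i) ^ 2 = ∑ i, ∑ j, h i * h j := by
    rw [sq, Finset.sum_mul_sum]
  have swap : ∑ i, ∑ j ∈ Finset.Iio i, h i * h j = ∑ i, ∑ j ∈ Finset.Ioi i, h i * h j := by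
    rw [Finset.sum_comm' (t' := Finset.univ) (s' := fun j => Finset.Ioi j)
      (fun x y => by simp [Finset.mem_Iio, Finset.mem_Ioi])]
    apply Finset.sum_congr rfl
    intro j _
    apply Finset.sum_congr rfl
    intro i _
    exact mul_comm _ _
  calc (∑ i, h i) ^ 2 = ∑ i, ∑ j, h i * h j := expand
    _ = ∑ i, ((∑ j ∈ Finset.Iio i, h i * h j) + h i * h i + ∑ j ∈ Finset.Ioi i, h i * h j) := by
        apply Finset.sum_congr rfl
        intro i _
        exact sum_split_point i _
    _ = (∑ i, ∑ j ∈ Finset.Iio i, h i * h j) + (∑ i, h i * h i)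
        + ∑ i, ∑ j ∈ Finset.Ioi i, h i * h j := by
        rw [Finset.sum_add_distrib, Finset.sum_add_distrib]
    _ = _ := by rw [swap]; ring

lemma sum_diff_two {n : ℕ} (u v : Fin n → ℤ) (p q : Fin n) (hpq : p ≠ q)
    (h : ∀ l, l ≠ p → l ≠ q → u l = v l) :
    ∑ i, u i = (∑ i, v i) + (u p - v p) + (u q - v q) := by
  have : ∑ i, (u i - v i) = ∑ i ∈ ({p, q} : Finset (Fin n)), (u i - v i) := by
    apply (Finset.sum_subset (Finset.subset_univ _) _).symm
    intro x _ hx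
    simp only [Finset.mem_insert, Finset.mem_singleton] at hx
    push_neg at hx
    rw [h x hx.1 hx.2]
    ring
  rw [Finset.sum_pair hpq] at this
  rw [Finset.sum_sub_distrib] at this
  omega

lemma alg_lemma {n : ℕ} (m : ℤ) (f g : Fin n → ℤ) (p q : Fin n) (hpq : p < q) (δ : ℤ)
    (hδ : δ ≠ 0) (hp : g p = f p + δ) (hq : g q = f q - δ)
    (hrest : ∀ l, l ≠ p → l ≠ q → g l = f l)
    (hS : ∑ i, ∑ j ∈ Finset.Ioi i, g i * (g j - m) =
          ∑ i, ∑ j ∈ Finset.Ioi i, f i * (f j - m)) :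
    δ = f q - f p - m * ((q : ℤ) - (p : ℤ)) := by
  have hpq' : p ≠ q := ne_of_lt hpq
  have hSplit : ∀ h : Fin n → ℤ, ∑ i, ∑ j ∈ Finset.Ioi i, h i * (h j - m)
      = (∑ i, ∑ j ∈ Finset.Ioi i, h i * h j)
        - m * ∑ i, ((Finset.Ioi i).card : ℤ) * h i := by
    intro h
    rw [Finset.mul_sum, ← Finset.sum_sub_distrib]
    apply Finset.sum_congr rfl
    intro i _
    have : ∑ j ∈ Finset.Ioi i, h i * (h j - m)
        = ∑ j ∈ Finset.Ioi i, (h i * h j - h i * m) := by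
      apply Finset.sum_congr rfl; intro j _; ring
    rw [this, Finset.sum_sub_distrib, Finset.sum_const]
    ring
  have hsum : ∑ i, g i = ∑ i, f i := by
    rw [sum_diff_two g f p q hpq' hrest, hp, hq]; ring
  have hsq : ∑ i, g i * g i = (∑ i, f i * f i) + 2 * δ * (f p - f q) + 2 * δ ^ 2 := by
    rw [sum_diff_two (fun i => g i * g i) (fun i => f i * f i) p q hpq'
      (fun l h1 h2 => by beta_reduce; rw [hrest l h1 h2]), hp, hq]
    ring
  have hlin : ∑ i, ((Finset.Ioi i).card : ℤ) * g i
      = (∑ i, ((Finset.Ioi i).card : ℤ) * f i) + δ * ((q : ℤ) - (p : ℤ)) := by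
    rw [sum_diff_two (fun i => ((Finset.Ioi i).card : ℤ) * g i)
      (fun i => ((Finset.Ioi i).card : ℤ) * f i) p q hpq'
      (fun l h1 h2 => by beta_reduce; rw [hrest l h1 h2]), hp, hq]
    have hcp : ((Finset.Ioi p).card : ℤ) = (n : ℤ) - 1 - (p : ℤ) := by
      rw [Fin.card_Ioi]
      have := q.isLt
      have := p.isLt
      have : (p : ℕ) < (q : ℕ) := hpq
      omega
    have hcq : ((Finset.Ioi q).card : ℤ) = (n : ℤ) - 1 - (q : ℤ) := by
      rw [Fin.card_Ioi]
      have := q.isLt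
      omega
    rw [hcp, hcq]
    ring
  have hT1 : 2 * (∑ i, ∑ j ∈ Finset.Ioi i, g i * g j)
      = 2 * (∑ i, ∑ j ∈ Finset.Ioi i, f i * f j) + 2 * (δ * (f q - f p) - δ ^ 2) := by
    have d1 := double_T1 g
    have d2 := double_T1 f
    rw [hsum, hsq] at d1
    rw [d2] at d1
    linarith
  rw [hSplit g, hSplit f, hlin] at hS
  have : 2 * ((∑ i, ∑ j ∈ Finset.Ioi i, g i * g j)
      - m * ((∑ i, ((Finset.Ioi i).card : ℤ) * f i) + δ * ((q : ℤ) - (p : ℤ))))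
      = 2 * ((∑ i, ∑ j ∈ Finset.Ioi i, f i * f j)
      - m * (∑ i, ((Finset.Ioi i).card : ℤ) * f i)) := by rw [hS]
  have key : δ * (f q - f p) - δ ^ 2 - m * (δ * ((q:ℤ) - (p:ℤ))) = 0 := by linarith
  have : δ * (f q - f p - δ - m * ((q:ℤ) - (p:ℤ))) = 0 := by ring_nf; ring_nf at key; linarith
  rcases mul_eq_zero.mp this with h | h
  · exact absurd h hδ
  · linarith

end Stmt8Aux

/-- if `m`-level rook equivalent singleton boards `b₁, b₂` with `n`
columns are adjacent in the `m`-level rook equivalence graph, then their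
`m`-level root vectors agree except in two positions `i₁ < i₂`, where the two
distinct entries are swapped. -/
theorem stmt8 (m : ℕ) (hm : 0 < m) {n : ℕ} (b₁ b₂ : Fin n → ℕ)
    (hb₁ : IsSingletonBoard m b₁) (hb₂ : IsSingletonBoard m b₂)
    (heq : MRookEquiv m b₁ b₂)
    (hedge : MovesSquares b₁ b₂ ∨ MovesSquares b₂ b₁) :
    ∃ i₁ i₂ : Fin n, i₁ < i₂ ∧
      mRootVec m b₁ i₁ ≠ mRootVec m b₁ i₂ ∧
      mRootVec m b₂ i₁ = mRootVec m b₁ i₂ ∧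
      mRootVec m b₂ i₂ = mRootVec m b₁ i₁ ∧
      ∀ l, l ≠ i₁ → l ≠ i₂ → mRootVec m b₂ l = mRootVec m b₁ l := by
  -- `MovesSquares` is symmetric, so we may assume `MovesSquares b₁ b₂`.
  have hmov : MovesSquares b₁ b₂ := by
    rcases hedge with h | h
    · exact h
    · obtain ⟨i, j, k, hij, hk, h1, h2, hrest⟩ := h
      exact ⟨j, i, k, hij.symm, hk, h2, h1, fun l hl1 hl2 => (hrest l hl2 hl1).symm⟩
  obtain ⟨u, v, k, huv, hk, h1, h2, hrest⟩ := hmov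
  -- the sum identity coming from equality of second rook numbers
  have hS : ∑ i : Fin n, ∑ j ∈ Finset.Ioi i, (b₂ i : ℤ) * ((b₂ j : ℤ) - (m : ℤ)) =
      ∑ i : Fin n, ∑ j ∈ Finset.Ioi i, (b₁ i : ℤ) * ((b₁ j : ℤ) - (m : ℤ)) := by
    rw [← rook2_int hm hb₁, ← rook2_int hm hb₂, heq 2]
  have hgu : ((b₂ u : ℕ) : ℤ) = (b₁ u : ℤ) - (k : ℤ) := by
    have := h1; omega
  have hgv : ((b₂ v : ℕ) : ℤ) = (b₁ v : ℤ) + (k : ℤ) := by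
    have := h2; omega
  have hgrest : ∀ l, l ≠ u → l ≠ v → ((b₂ l : ℕ) : ℤ) = (b₁ l : ℤ) := by
    intro l hl1 hl2
    rw [hrest l hl1 hl2]
  have hk1 : (1 : ℤ) ≤ (k : ℤ) := by exact_mod_cast hk
  rcases lt_trichotomy u v with huv' | huv' | huv'
  · -- u < v, use p = u, q = v, δ = -k
    have hδ := alg_lemma (m : ℤ) (fun i => (b₁ i : ℤ)) (fun i => (b₂ i : ℤ)) u v huv'
      (-(k : ℤ)) (by omega)
      (by beta_reduce; rw [hgu]; ring)
      (by beta_reduce; rw [hgv]; ring)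
      (fun l hl1 hl2 => by beta_reduce; exact hgrest l hl1 hl2)
      hS
    beta_reduce at hδ
    have hexp : (m : ℤ) * ((v : ℤ) - (u : ℤ)) = (m : ℤ) * (v : ℤ) - (m : ℤ) * (u : ℤ) := by
      ring
    refine ⟨u, v, huv', ?_, ?_, ?_, ?_⟩
    · unfold mRootVec
      intro h
      have h' : (m : ℤ) * (u : ℤ) - (b₁ u : ℤ) = (m : ℤ) * (v : ℤ) - (b₁ v : ℤ) := h
      linarith
    · unfold mRootVec
      linarith
    · unfold mRootVec
      linarith
    · intro l hl1 hl2
      unfold mRootVec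
      rw [hgrest l hl1 hl2]
  · exact absurd huv' huv
  · -- v < u, use p = v, q = u, δ = k
    have hδ := alg_lemma (m : ℤ) (fun i => (b₁ i : ℤ)) (fun i => (b₂ i : ℤ)) v u huv'
      (k : ℤ) (by omega)
      (by beta_reduce; rw [hgv])
      (by beta_reduce; rw [hgu])
      (fun l hl1 hl2 => by beta_reduce; exact hgrest l hl2 hl1)
      hS
    beta_reduce at hδ
    have hexp : (m : ℤ) * ((u : ℤ) - (v : ℤ)) = (m : ℤ) * (u : ℤ) - (m : ℤ) * (v : ℤ) := by
      ring
    refine ⟨v, u, huv', ?_, ?_, ?_, ?_⟩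
    · unfold mRootVec
      intro h
      have h' : (m : ℤ) * (v : ℤ) - (b₁ v : ℤ) = (m : ℤ) * (u : ℤ) - (b₁ u : ℤ) := h
      linarith
    · unfold mRootVec
      linarith
    · unfold mRootVec
      linarith
    · intro l hl1 hl2
      unfold mRootVec
      rw [hgrest l hl2 hl1]
end
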